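/- arXiv:2106.03319 — 5 statements merged into one kernel-verified Lean document; each statement's English description precedes it below -/
import Mathlib

section
/- Let M be an n×t matrix over F_q of rank m. If C is an n×n matrix over F_q such that the matrix equation MZ = C has a solution Z (a t×n matrix), then every row of C is the same linear combination of the first m rows of C as the corresponding relation among the rows of M; consequently C is determined by m of its rows together with M, and the number of such C of rank k is at most d·q^{mk + k(n−k)} for some absolute constant d (depending only on n, k). -/
open Matrix Submodule Set

section aux
variable {F : Type} [Field F] {n k : ℕ}

/-- Existence of a pivot column set. -/
lemma aux_pivots (C : Matrix (Fin n) (Fin n) F) (hC : C.rank = k) :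
    ∃ S : Finset (Fin n), S.card = k ∧
      ∀ j : Fin n, Cᵀ j ∈ span F (Cᵀ '' (S : Set (Fin n))) := by
  classical
  obtain ⟨b, hbsub, hbspan, hbli⟩ := exists_linearIndependent F (Set.range Cᵀ)
  haveI : Fintype b := (Set.Finite.subset (Set.finite_range _) hbsub).fintype
  have hcard : b.toFinset.card = k := by
    rw [← finrank_span_set_eq_card hbli, hbspan]
    exact (Matrix.rank_eq_finrank_span_cols C).symm.trans hC
  choose ind hind using fun v : b => hbsub v.2
  have hinj : Function.Injective ind := fun v w h => by
    apply Subtype.ext; rw [← hind v, ← hind w, h]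
  refine ⟨Finset.univ.image ind, ?_, ?_⟩
  · rw [Finset.card_image_of_injective _ hinj, Finset.card_univ,
      ← Set.toFinset_card]
    simpa using hcard
  · intro j
    have hsub : b ⊆ Cᵀ '' (↑(Finset.univ.image ind) : Set (Fin n)) := by
      intro v hv
      exact ⟨ind ⟨v, hv⟩, by simp, hind ⟨v, hv⟩⟩
    have : Cᵀ j ∈ span F (Set.range Cᵀ) := subset_span ⟨j, rfl⟩
    rw [← hbspan] at this
    exact span_mono hsub this

end aux

/-- Given M ∈ M_{n×t}(F_q) of rank m, the number of C ∈ M_n(F_q) of rank k (k ≤ m) such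
that MZ = C has a solution is at most d·q^{mk + k(n−k)} for a constant d depending only
on n and k. -/
theorem stmt_3 (n k : ℕ) :
    ∃ d : ℕ, 0 < d ∧
      ∀ (t m q : ℕ) (F : Type) [Field F] [Fintype F], Fintype.card F = q →
        k ≤ m →
        ∀ M : Matrix (Fin n) (Fin t) F, M.rank = m →
        Nat.card {C : Matrix (Fin n) (Fin n) F //
            C.rank = k ∧ ∃ Z : Matrix (Fin t) (Fin n) F, M * Z = C} ≤
          d * q ^ (m * k + k * (n - k)) := by
  classical
  refine ⟨2 ^ n, by positivity, ?_⟩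
  intro t m q F _ _ hq hkm M hM
  set W : Submodule F (Fin n → F) := LinearMap.range M.mulVecLin with hW
  -- target type
  let T := Σ S : {S : Finset (Fin n) // S.card = k},
      (Fin k → W) × (Fin k → (S.1ᶜ : Finset (Fin n)) → F)
  let recon : T → Matrix (Fin n) (Fin n) F := fun d => fun x j =>
    if h : j ∈ d.1.1 then ((d.2.1 ((d.1.1.orderIsoOfFin d.1.2).symm ⟨j, h⟩)) : Fin n → F) x
    else ∑ i, ((d.2.1 i : Fin n → F) x) * d.2.2 i ⟨j, Finset.mem_compl.mpr h⟩
  have key : ∀ C : {C : Matrix (Fin n) (Fin n) F //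
      C.rank = k ∧ ∃ Z : Matrix (Fin t) (Fin n) F, M * Z = C},
      ∃ d : T, recon d = C.1 := by
    rintro ⟨C, hCrank, Z, hZ⟩
    obtain ⟨S, hScard, hSspan⟩ := aux_pivots C hCrank
    have hcolW : ∀ j, Cᵀ j ∈ W := by
      intro j
      refine ⟨fun y => Z y j, ?_⟩
      ext x
      simp [← hZ, Matrix.mulVecLin_apply, Matrix.mulVec, Matrix.mul_apply, dotProduct]
    let e := S.orderIsoOfFin hScard
    let f : Fin k → W := fun i => ⟨Cᵀ (e i), hcolW _⟩
    have hspan' : ∀ j : Fin n, Cᵀ j ∈ span F (Set.range fun i => Cᵀ (e i : Fin n)) := by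
      intro j
      have : Cᵀ '' (S : Set (Fin n)) = Set.range fun i => Cᵀ (e i : Fin n) := by
        ext v
        constructor
        · rintro ⟨j', hj', rfl⟩
          exact ⟨e.symm ⟨j', hj'⟩, by simp⟩
        · rintro ⟨i, rfl⟩
          exact ⟨e i, (e i).2, rfl⟩
      rw [← this]; exact hSspan j
    choose B hB using fun j : Fin n =>
      (mem_span_range_iff_exists_fun F).mp (hspan' j)
    refine ⟨⟨⟨S, hScard⟩, f, fun i j => B j.1 i⟩, ?_⟩
    ext x j
    by_cases h : j ∈ S
    · simp only [recon, dif_pos h]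
      have : Cᵀ (e (e.symm ⟨j, h⟩) : Fin n) x = C x j := by simp
      simp only [f] at this ⊢; exact this
    · simp only [recon, dif_neg h]
      have := congrFun (hB j) x
      simp only [Finset.sum_apply, Pi.smul_apply, smul_eq_mul] at this
      calc (∑ i, ((f i : Fin n → F) x) * B j i)
          = ∑ i, B j i * Cᵀ (e i : Fin n) x := by
            simp [f, mul_comm]
        _ = C x j := this
  choose φ hφ using key
  have hinj : Function.Injective φ := by
    intro C1 C2 h
    apply Subtype.ext
    rw [← hφ C1, ← hφ C2, h]
  have hle : Nat.card {C : Matrix (Fin n) (Fin n) F //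
      C.rank = k ∧ ∃ Z : Matrix (Fin t) (Fin n) F, M * Z = C} ≤ Nat.card T :=
    Nat.card_le_card_of_injective φ hinj
  refine hle.trans ?_
  -- compute card of T
  have hfr : Module.finrank F W = m := hM
  have hWcard : Fintype.card W = q ^ m := by
    rw [Module.card_eq_pow_finrank (K := F) (V := W), hq, hfr]
  have hTcard : Nat.card T ≤ 2 ^ n * q ^ (m * k + k * (n - k)) := by
    rw [Nat.card_eq_fintype_card, Fintype.card_sigma]
    have hfiber : ∀ S : {S : Finset (Fin n) // S.card = k},
        Fintype.card ((Fin k → W) × (Fin k → (S.1ᶜ : Finset (Fin n)) → F)) =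
          q ^ (m * k + k * (n - k)) := by
      intro S
      have h1 : Fintype.card (S.1ᶜ : Finset (Fin n)) = n - k := by
        rw [Fintype.card_coe, Finset.card_compl, Fintype.card_fin, S.2]
      rw [Fintype.card_prod, Fintype.card_pi, Fintype.card_pi]
      simp only [Fintype.card_fun, h1, hWcard, hq, Finset.prod_const, Finset.card_univ,
        Fintype.card_fin]
      rw [pow_add, ← pow_mul, ← pow_mul]
      ring_nf
    calc (∑ S : {S : Finset (Fin n) // S.card = k},
          Fintype.card ((Fin k → W) × (Fin k → (S.1ᶜ : Finset (Fin n)) → F)))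
        = Fintype.card {S : Finset (Fin n) // S.card = k} * q ^ (m * k + k * (n - k)) := by
          rw [Finset.sum_congr rfl fun S _ => hfiber S, Finset.sum_const, Finset.card_univ,
            smul_eq_mul]
      _ ≤ 2 ^ n * q ^ (m * k + k * (n - k)) := by
          gcongr
          calc Fintype.card {S : Finset (Fin n) // S.card = k}
              ≤ Fintype.card (Finset (Fin n)) := Fintype.card_subtype_le _
            _ = 2 ^ n := by rw [Fintype.card_finset, Fintype.card_fin]
  exact hTcard
end

section
/- For n ≥ m ≥ k ≥ 0, the number of pairs (M, C) with M ∈ M_{n×t}(F_q) of rank m and C ∈ M_n(F_q) of rank k such that the equation MZ = C has a solution Z ∈ M_{t×n}(F_q) is at most C' · q^{nm + m(t−m) + mk + k(n−k)} for some constant C' independent of q. -/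
open Submodule Set Matrix

/-- Decoding function: reconstructs a matrix entry from index data `c, c'` and
coefficient matrices `D, E`, relative to a reference family `v`. -/
noncomputable def decodeFn {F : Type} [Field F] {a b r s : ℕ}
    (v : Fin r → Fin a → F) (c : Fin s → Fin b) (c' : Fin (b - s) → Fin b)
    (D : Matrix (Fin r) (Fin s) F) (E : Matrix (Fin s) (Fin (b - s)) F)
    (i : Fin a) (j : Fin b) : F :=
  if h : ∃ p, c p = j then ∑ l, D l h.choose * v l i
  else if h' : ∃ p', c' p' = j then ∑ p, (∑ l, D l p * v l i) * E p h'.choose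
  else 0

/-- Key encoding lemma: a rank-`s` matrix whose columns lie in the span of `v`
can be encoded by index data and coefficient matrices, from which it is decodable. -/
theorem key_encode {F : Type} [Field F] {a b r s : ℕ} (hsb : s ≤ b)
    (v : Fin r → Fin a → F) (X : Matrix (Fin a) (Fin b) F)
    (hcol : ∀ j, Xᵀ j ∈ span F (Set.range v)) (hrank : X.rank = s) :
    ∃ d : (Fin s → Fin b) × (Fin (b - s) → Fin b) ×
        Matrix (Fin r) (Fin s) F × Matrix (Fin s) (Fin (b - s)) F,
      (∀ i j, X i j = decodeFn v d.1 d.2.1 d.2.2.1 d.2.2.2 i j) ∧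
      (∀ p i, X i (d.1 p) = ∑ l, d.2.2.1 l p * v l i) ∧
      span F (Set.range fun p => Xᵀ (d.1 p)) = span F (Set.range Xᵀ) := by
  classical
  have hW : Module.finrank F (span F (Set.range Xᵀ)) = s := by
    change Module.finrank F (span F (Set.range X.col)) = s
    rw [← Matrix.rank_eq_finrank_span_cols, hrank]
  obtain ⟨b', hb'sub, hb'span, hb'ind⟩ := exists_linearIndependent F (Set.range Xᵀ)
  have hfin : b'.Finite := (Set.finite_range Xᵀ).subset hb'sub
  haveI : Fintype b' := hfin.fintype
  have hcard : Fintype.card b' = s := by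
    rw [← Set.toFinset_card, ← finrank_span_set_eq_card hb'ind, hb'span, hW]
  let e : Fin s ≃ b' := (Fintype.equivFinOfCardEq hcard).symm
  have hpre : ∀ p : Fin s, ∃ j, Xᵀ j = (e p : Fin a → F) := fun p => hb'sub (e p).2
  let c : Fin s → Fin b := fun p => (hpre p).choose
  have hc : ∀ p, Xᵀ (c p) = (e p : Fin a → F) := fun p => (hpre p).choose_spec
  have hcinj : Function.Injective c := by
    intro p p' hpp
    have hee : (e p : Fin a → F) = e p' := by rw [← hc, ← hc, hpp]
    exact e.injective (Subtype.coe_injective hee)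
  have hrange : Set.range (fun p => Xᵀ (c p)) = b' := by
    ext w
    constructor
    · rintro ⟨p, rfl⟩
      show Xᵀ (c p) ∈ b'
      rw [hc]; exact (e p).2
    · intro hw
      refine ⟨e.symm ⟨w, hw⟩, ?_⟩
      show Xᵀ (c (e.symm ⟨w, hw⟩)) = w
      rw [hc, Equiv.apply_symm_apply]
  have hspan : span F (Set.range fun p => Xᵀ (c p)) = span F (Set.range Xᵀ) := by
    rw [hrange, hb'span]
  -- coefficients in terms of v
  have hD : ∀ p : Fin s, ∃ d : Fin r → F, ∑ l, d l • v l = Xᵀ (c p) :=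
    fun p => (mem_span_range_iff_exists_fun F).mp (hcol (c p))
  let D : Matrix (Fin r) (Fin s) F := fun l p => (hD p).choose l
  have h1 : ∀ p i, X i (c p) = ∑ l, D l p * v l i := by
    intro p i
    have := congrFun (hD p).choose_spec i
    simp only [Finset.sum_apply, Pi.smul_apply, smul_eq_mul] at this
    exact this.symm
  -- complement indices
  let T : Finset (Fin b) := Finset.image c Finset.univ
  have hT : T.card = s := by
    rw [Finset.card_image_of_injective _ hcinj, Finset.card_univ, Fintype.card_fin]
  have hTc : Fintype.card (↥(Tᶜ : Finset (Fin b))) = b - s := by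
    rw [Fintype.card_coe, Finset.card_compl, hT, Fintype.card_fin]
  let e' : Fin (b - s) ≃ ↥(Tᶜ : Finset (Fin b)) := (Fintype.equivFinOfCardEq hTc).symm
  let c' : Fin (b - s) → Fin b := fun p' => (e' p' : Fin b)
  have hcov : ∀ j : Fin b, (∃ p, c p = j) ∨ (∃ p', c' p' = j) := by
    intro j
    by_cases hj : j ∈ T
    · left
      obtain ⟨p, -, hp⟩ := Finset.mem_image.mp hj
      exact ⟨p, hp⟩
    · right
      exact ⟨e'.symm ⟨j, Finset.mem_compl.mpr hj⟩, by simp [c']⟩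
  -- coefficients of remaining columns in terms of the chosen columns
  have hE : ∀ p', ∃ g : Fin s → F, ∑ p, g p • Xᵀ (c p) = Xᵀ (c' p') := by
    intro p'
    refine (mem_span_range_iff_exists_fun F).mp ?_
    rw [hspan]
    exact subset_span (Set.mem_range_self _)
  let E : Matrix (Fin s) (Fin (b - s)) F := fun p p' => (hE p').choose p
  have h2 : ∀ p' i, X i (c' p') = ∑ p, (∑ l, D l p * v l i) * E p p' := by
    intro p' i
    have h0 := congrFun (hE p').choose_spec i
    simp only [Finset.sum_apply, Pi.smul_apply, smul_eq_mul] at h0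
    calc X i (c' p') = ∑ p, (hE p').choose p * Xᵀ (c p) i := h0.symm
      _ = ∑ p, (∑ l, D l p * v l i) * E p p' := by
          refine Finset.sum_congr rfl fun p _ => ?_
          simp only [Matrix.transpose_apply]
          rw [h1 p i]
          exact mul_comm _ _
  refine ⟨⟨c, c', D, E⟩, ?_, h1, hspan⟩
  intro i j
  unfold decodeFn
  split_ifs with h h'
  · conv_lhs => rw [← h.choose_spec]
    exact h1 _ _
  · conv_lhs => rw [← h'.choose_spec]
    exact h2 _ _
  · rcases hcov j with hcv | hcv <;> [exact absurd hcv h; exact absurd hcv h']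

/-- For n ≥ m ≥ k ≥ 0, the number of pairs (M, C), M ∈ M_{n×t}(F_q) of rank m and
C ∈ M_n(F_q) of rank k, such that MZ = C is solvable, is at most
C'·q^{nm + m(t−m) + mk + k(n−k)} with C' independent of q. -/
theorem stmt_4 (n t m k : ℕ) (hnt : n ≤ t) (hkm : k ≤ m) (hmn : m ≤ n) :
    ∃ C' : ℕ, 0 < C' ∧
      ∀ (q : ℕ) (F : Type) [Field F] [Fintype F], Fintype.card F = q →
        Nat.card {p : Matrix (Fin n) (Fin t) F × Matrix (Fin n) (Fin n) F //
            p.1.rank = m ∧ p.2.rank = k ∧ ∃ Z : Matrix (Fin t) (Fin n) F, p.1 * Z = p.2} ≤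
          C' * q ^ (n * m + m * (t - m) + m * k + k * (n - k)) := by
  classical
  refine ⟨t ^ m * t ^ (t - m) * n ^ k * n ^ (n - k), ?_, ?_⟩
  · have hpos : ∀ a b : ℕ, (b = 0 → a = 0) → 0 < b ^ a := by
      intro a b h
      rcases Nat.eq_zero_or_pos b with h0 | h0
      · rw [h h0, pow_zero]; exact one_pos
      · exact pow_pos h0 a
    have h1 := hpos m t (by omega)
    have h2 := hpos (t - m) t (by omega)
    have h3 := hpos k n (by omega)
    have h4 := hpos (n - k) n (by omega)
    positivity
  intro q F _ _ hq
  set S := {p : Matrix (Fin n) (Fin t) F × Matrix (Fin n) (Fin n) F //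
      p.1.rank = m ∧ p.2.rank = k ∧ ∃ Z : Matrix (Fin t) (Fin n) F, p.1 * Z = p.2}
  -- standard basis reference family
  set vstd : Fin n → Fin n → F := fun l i => if i = l then (1 : F) else 0 with hvstd
  have main : ∀ x : S, ∃ d :
      ((Fin m → Fin t) × (Fin (t - m) → Fin t) ×
        Matrix (Fin n) (Fin m) F × Matrix (Fin m) (Fin (t - m)) F) ×
      ((Fin k → Fin n) × (Fin (n - k) → Fin n) ×
        Matrix (Fin m) (Fin k) F × Matrix (Fin k) (Fin (n - k)) F),
      (∀ i j, x.1.1 i j = decodeFn vstd d.1.1 d.1.2.1 d.1.2.2.1 d.1.2.2.2 i j) ∧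
      (∀ i j, x.1.2 i j = decodeFn (fun p i => ∑ l, d.1.2.2.1 l p * vstd l i)
          d.2.1 d.2.2.1 d.2.2.2.1 d.2.2.2.2 i j) := by
    rintro ⟨⟨M, C⟩, hM, hC, Z, hZ⟩
    have hcolM : ∀ j, Mᵀ j ∈ span F (Set.range vstd) := by
      intro j
      refine (mem_span_range_iff_exists_fun F).mpr ⟨fun l => Mᵀ j l, ?_⟩
      funext i
      simp only [Finset.sum_apply, Pi.smul_apply, smul_eq_mul, hvstd, mul_ite, mul_one, mul_zero]
      rw [Finset.sum_ite_eq Finset.univ i (fun l => Mᵀ j l)]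
      simp
    have hZ' : M * Z = C := hZ
    have hM' : M.rank = m := hM
    have hC' : C.rank = k := hC
    obtain ⟨dM, hdM1, hdM2, hdMspan⟩ := key_encode (hmn.trans hnt) vstd M hcolM hM'
    set vC : Fin m → Fin n → F := fun p i => ∑ l, dM.2.2.1 l p * vstd l i with hvC
    have hveq : (fun p => Mᵀ (dM.1 p)) = vC := by
      funext p i
      exact hdM2 p i
    have hcolC : ∀ j, Cᵀ j ∈ span F (Set.range vC) := by
      intro j
      have h0 : Cᵀ j ∈ span F (Set.range Mᵀ) := by
        change Cᵀ j ∈ span F (Set.range M.col)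
        rw [← Matrix.range_mulVecLin]
        refine ⟨fun x => Z x j, ?_⟩
        funext i
        rw [← hZ']
        simp [Matrix.mulVecLin_apply, Matrix.mulVec, dotProduct, Matrix.mul_apply,
          Matrix.transpose_apply]
      rw [← hveq, hdMspan]
      exact h0
    obtain ⟨dC, hdC1, -, -⟩ := key_encode (hkm.trans hmn) vC C hcolC hC'
    exact ⟨⟨dM, dC⟩, hdM1, hdC1⟩
  choose enc henc1 henc2 using main
  have hinj : Function.Injective enc := by
    intro x y hxy
    have hMeq : x.1.1 = y.1.1 := by
      funext i j
      rw [henc1 x i j, henc1 y i j, hxy]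
    have hCeq : x.1.2 = y.1.2 := by
      funext i j
      rw [henc2 x i j, henc2 y i j, hxy]
    exact Subtype.ext (Prod.ext hMeq hCeq)
  calc Nat.card S ≤ Nat.card (((Fin m → Fin t) × (Fin (t - m) → Fin t) ×
        Matrix (Fin n) (Fin m) F × Matrix (Fin m) (Fin (t - m)) F) ×
      ((Fin k → Fin n) × (Fin (n - k) → Fin n) ×
        Matrix (Fin m) (Fin k) F × Matrix (Fin k) (Fin (n - k)) F)) :=
        Nat.card_le_card_of_injective enc hinj
    _ = t ^ m * t ^ (t - m) * n ^ k * n ^ (n - k) *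
          q ^ (n * m + m * (t - m) + m * k + k * (n - k)) := by
        have cm : ∀ a b : ℕ, Fintype.card (Matrix (Fin a) (Fin b) F) = q ^ (a * b) := by
          intro a b
          rw [show Fintype.card (Matrix (Fin a) (Fin b) F)
              = Fintype.card (Fin a → Fin b → F) from rfl]
          rw [Fintype.card_fun, Fintype.card_fun, Fintype.card_fin, Fintype.card_fin, hq,
            ← pow_mul, Nat.mul_comm]
        simp only [Nat.card_eq_fintype_card, Fintype.card_prod, Fintype.card_fun,
          Fintype.card_fin, cm]
        rw [pow_add, pow_add, pow_add]
        ring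
end

section
/- For 0 ≤ m < n and 0 ≤ k ≤ n with (m,k) ≠ (0,0), the number of pairs (M, Y) with M ∈ M_{n×dn}(F_q) of rank m and Y ∈ M_n(F_q) of rank k is at most C·q^{(d+1)nm + 2nk − m² − k²}, and this is at most C·q^{(d+1)n² − (d−1)n − 1}. -/
lemma card_mat (a b : ℕ) (F : Type) [Fintype F] [DecidableEq F] :
    Nat.card (Matrix (Fin a) (Fin b) F) = Fintype.card F ^ (a * b) := by
  show Nat.card (Fin a → Fin b → F) = _
  simp [Nat.card_eq_fintype_card, Fintype.card_fun, ← pow_mul, mul_comm]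

open Matrix in
lemma exists_factorization {F : Type} [Field F] {n N m : ℕ}
    (M : Matrix (Fin n) (Fin N) F) (hM : M.rank = m) :
    ∃ (B : Matrix (Fin n) (Fin m) F) (P : Matrix (Fin m) (Fin N) F),
      M = B * P ∧ ∀ v : Fin m → F, B.mulVec v = 0 → v = 0 := by
  have hfr : Module.finrank F (LinearMap.range M.mulVecLin) = m := by
    unfold Matrix.rank at hM; exact hM
  let b : Module.Basis (Fin m) F (LinearMap.range M.mulVecLin) :=
    Module.finBasisOfFinrankEq F _ hfr
  have hmem : ∀ j, M.mulVec (Pi.single j 1) ∈ LinearMap.range M.mulVecLin :=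
    fun j => ⟨Pi.single j 1, rfl⟩
  refine ⟨Matrix.of (fun i k => (b k : Fin n → F) i),
          Matrix.of (fun k j => b.repr ⟨M.mulVec (Pi.single j 1), hmem j⟩ k), ?_, ?_⟩
  · ext i j
    have hs := b.sum_repr ⟨M.mulVec (Pi.single j 1), hmem j⟩
    have hs' := congrFun (congrArg (Subtype.val) hs) i
    have hcol : M.mulVec (Pi.single j 1) i = M i j := by
      simp [Matrix.mulVec, dotProduct, Pi.single_apply]
    rw [Matrix.mul_apply]
    simp only [Matrix.of_apply]
    have hs'' : (M.mulVec (Pi.single j 1)) i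
        = ((∑ k, b.repr ⟨M.mulVec (Pi.single j 1), hmem j⟩ k • b k :
            LinearMap.range M.mulVecLin) : Fin n → F) i := hs'.symm
    rw [← hcol, hs'']
    push_cast [Submodule.coe_sum]
    simp [mul_comm]
  · intro v hv
    have hsum : (∑ k, v k • b k) = 0 := by
      apply Subtype.ext
      push_cast [Submodule.coe_sum]
      rw [← hv]
      ext i
      simp [Matrix.mulVec, dotProduct, mul_comm]
    funext i
    exact Fintype.linearIndependent_iff.mp b.linearIndependent v hsum i

lemma card_rank_le (n N m : ℕ) (F : Type) [Field F] [Fintype F] [DecidableEq F] :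
    Nat.card {M : Matrix (Fin n) (Fin N) F // M.rank = m} * Fintype.card F ^ (m * m) ≤
      2 ^ m * Fintype.card F ^ (n * m + m * N) := by
  classical
  set q := Fintype.card F with hq
  have hq2 : 2 ≤ q := Fintype.one_lt_card
  choose B P hBP hinj using fun (M : {M : Matrix (Fin n) (Fin N) F // M.rank = m}) =>
    exists_factorization M.1 M.2
  set A := Nat.card {M : Matrix (Fin n) (Fin N) F // M.rank = m} with hA
  let f : {M : Matrix (Fin n) (Fin N) F // M.rank = m} × GL (Fin m) F →
      Matrix (Fin n) (Fin m) F × Matrix (Fin m) (Fin N) F :=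
    fun x => (B x.1 * (x.2 : Matrix (Fin m) (Fin m) F),
      ((x.2⁻¹ : GL (Fin m) F) : Matrix (Fin m) (Fin m) F) * P x.1)
  have hf : Function.Injective f := by
    rintro ⟨M, G⟩ ⟨M', G'⟩ h
    obtain ⟨h1, h2⟩ := Prod.ext_iff.mp h
    simp only [f] at h1 h2
    have key : ∀ (M : {M : Matrix (Fin n) (Fin N) F // M.rank = m}) (G : GL (Fin m) F),
        (B M * (G : Matrix (Fin m) (Fin m) F)) *
          (((G⁻¹ : GL (Fin m) F) : Matrix (Fin m) (Fin m) F) * P M) = M.1 := by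
      intro M G
      rw [Matrix.mul_assoc, ← Matrix.mul_assoc (G : Matrix (Fin m) (Fin m) F),
        G.mul_inv, Matrix.one_mul, ← hBP]
    have hMM : M = M' := by
      apply Subtype.ext
      rw [← key M G, ← key M' G', h1, h2]
    subst hMM
    have hGG : (G : Matrix (Fin m) (Fin m) F) = (G' : Matrix (Fin m) (Fin m) F) := by
      have hD : B M * ((G : Matrix (Fin m) (Fin m) F) - (G' : Matrix (Fin m) (Fin m) F)) = 0 := by
        rw [Matrix.mul_sub, h1, sub_self]
      ext k j
      have hv : (B M).mulVec
          (fun k => ((G : Matrix (Fin m) (Fin m) F) - (G' : Matrix (Fin m) (Fin m) F)) k j) = 0 := by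
        funext i
        have := congrFun (congrFun hD i) j
        rw [Matrix.mul_apply] at this
        simpa [Matrix.mulVec, dotProduct] using this
      have := congrFun (hinj M _ hv) k
      simp only [Matrix.sub_apply, Pi.zero_apply] at this
      exact sub_eq_zero.mp this
    exact Prod.ext_iff.mpr ⟨rfl, Units.ext hGG⟩
  have step1 : A * Nat.card (GL (Fin m) F) ≤ q ^ (n * m) * q ^ (m * N) := by
    have := Nat.card_le_card_of_injective f hf
    rwa [Nat.card_prod, Nat.card_prod, card_mat, card_mat, ← hq] at this
  have step2 : q ^ (m * m) ≤ 2 ^ m * Nat.card (GL (Fin m) F) := by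
    rw [Matrix.card_GL_field]
    calc q ^ (m * m) = ∏ _i : Fin m, q ^ m := by
          rw [Finset.prod_const, Finset.card_univ, Fintype.card_fin, ← pow_mul]
      _ ≤ ∏ i : Fin m, (2 * (q ^ m - q ^ (i : ℕ))) := by
          apply Finset.prod_le_prod'
          intro i _
          have e2 : 2 * q ^ (i : ℕ) ≤ q ^ m := by
            calc 2 * q ^ (i : ℕ) ≤ q * q ^ (i : ℕ) := Nat.mul_le_mul_right _ hq2
              _ = q ^ ((i : ℕ) + 1) := (pow_succ' q _).symm
              _ ≤ q ^ m := Nat.pow_le_pow_right (by omega) i.isLt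
          omega
      _ = 2 ^ m * ∏ i : Fin m, (q ^ m - q ^ (i : ℕ)) := by
          rw [Finset.prod_mul_distrib, Finset.prod_const, Finset.card_univ, Fintype.card_fin]
  calc A * q ^ (m * m) ≤ A * (2 ^ m * Nat.card (GL (Fin m) F)) :=
        Nat.mul_le_mul_left _ step2
    _ = 2 ^ m * (A * Nat.card (GL (Fin m) F)) := by ring
    _ ≤ 2 ^ m * (q ^ (n * m) * q ^ (m * N)) := Nat.mul_le_mul_left _ step1
    _ = 2 ^ m * q ^ (n * m + m * N) := by rw [pow_add]


lemma exp_bound (e n m k : ℕ) (hm : m < n) (hk : k ≤ n) :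
    (e + 2) * n * m + 2 * n * k - m ^ 2 - k ^ 2 ≤ (e + 2) * n ^ 2 - e * n - 1 := by
  have f1 : 2 * n * k ≤ n ^ 2 + k ^ 2 := two_mul_le_add_sq n k
  have f2 : (e + 2) * n * m + e * n + 1 ≤ (e + 1) * n ^ 2 + m ^ 2 := by
    obtain ⟨t, rfl⟩ : ∃ t, n = m + 1 + t := ⟨n - m - 1, by omega⟩
    have hid : (e + 1) * (m + 1 + t) ^ 2 + m ^ 2 =
        (e + 2) * (m + 1 + t) * m + e * (m + 1 + t) + 1 +
          (e * (m + 1 + t) * t + t ^ 2 + 2 * t) := by ring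
    omega
  have hsplit : (e + 2) * n ^ 2 = (e + 1) * n ^ 2 + n ^ 2 := by ring
  omega

/-- For 0 ≤ m < n, 0 ≤ k ≤ n, (m,k) ≠ (0,0), the number of pairs (M,Y) with
M ∈ M_{n×dn}(F_q) of rank m and Y ∈ M_n(F_q) of rank k is at most
C·q^{(d+1)nm + 2nk − m² − k²} ≤ C·q^{(d+1)n² − (d−1)n − 1}. -/
theorem stmt_13 (d n : ℕ) (hd : 1 ≤ d) (hn : 2 ≤ n) :
    ∃ C : ℕ, 0 < C ∧
      ∀ (m k q : ℕ) (F : Type) [Field F] [Fintype F], Fintype.card F = q →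
        m < n → k ≤ n → (m, k) ≠ (0, 0) →
        Nat.card {M : Matrix (Fin n) (Fin (d * n)) F // M.rank = m} *
          Nat.card {Y : Matrix (Fin n) (Fin n) F // Y.rank = k} ≤
            C * q ^ ((d + 1) * n * m + 2 * n * k - m ^ 2 - k ^ 2) ∧
        C * q ^ ((d + 1) * n * m + 2 * n * k - m ^ 2 - k ^ 2) ≤
          C * q ^ ((d + 1) * n ^ 2 - (d - 1) * n - 1) := by
  refine ⟨4 ^ n, by positivity, ?_⟩
  intro m k q F _ _ hF hm hk _
  subst hF
  letI := Classical.decEq F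
  set q := Fintype.card F with hq
  have hq1 : 1 ≤ q := Fintype.card_pos
  have hq2 : 2 ≤ q := Fintype.one_lt_card
  set AM := Nat.card {M : Matrix (Fin n) (Fin (d * n)) F // M.rank = m} with hAM
  set AY := Nat.card {Y : Matrix (Fin n) (Fin n) F // Y.rank = k} with hAY
  have hM := card_rank_le n (d * n) m F
  have hY := card_rank_le n n k F
  rw [← hq, ← hAM] at hM
  rw [← hq, ← hAY] at hY
  set E := (d + 1) * n * m + 2 * n * k - m ^ 2 - k ^ 2 with hE
  have h1 : m * m ≤ (d + 1) * n * m := by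
    calc m * m ≤ n * m := Nat.mul_le_mul_right m hm.le
      _ ≤ (d + 1) * n * m := Nat.mul_le_mul_right m (Nat.le_mul_of_pos_left n (by omega))
  have h2 : k * k ≤ 2 * n * k := by
    calc k * k ≤ n * k := Nat.mul_le_mul_right k hk
      _ ≤ 2 * n * k := Nat.mul_le_mul_right k (by omega)
  have key : E + (m * m + k * k) = n * m + m * (d * n) + (n * k + k * n) := by
    have hr : n * m + m * (d * n) + (n * k + k * n) = (d + 1) * n * m + 2 * n * k := by ring
    rw [hE, hr, pow_two, pow_two]
    omega
  have hprod : (AM * AY) * q ^ (m * m + k * k) ≤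
      (2 ^ (m + k) * q ^ E) * q ^ (m * m + k * k) := by
    calc (AM * AY) * q ^ (m * m + k * k) = (AM * q ^ (m * m)) * (AY * q ^ (k * k)) := by
          rw [pow_add]; ring
      _ ≤ (2 ^ m * q ^ (n * m + m * (d * n))) * (2 ^ k * q ^ (n * k + k * n)) :=
          Nat.mul_le_mul hM hY
      _ = 2 ^ (m + k) * q ^ (n * m + m * (d * n) + (n * k + k * n)) := by
          rw [pow_add, pow_add]; ring
      _ = (2 ^ (m + k) * q ^ E) * q ^ (m * m + k * k) := by
          rw [← key, pow_add]; ring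
  have hmain : AM * AY ≤ 2 ^ (m + k) * q ^ E :=
    Nat.le_of_mul_le_mul_right hprod (by positivity)
  have h4n : 2 ^ (m + k) ≤ 4 ^ n := by
    calc (2 : ℕ) ^ (m + k) ≤ 2 ^ (2 * n) := Nat.pow_le_pow_right (by omega) (by omega)
      _ = 4 ^ n := by rw [show (4 : ℕ) = 2 ^ 2 from rfl, ← pow_mul]
  constructor
  · exact hmain.trans (Nat.mul_le_mul_right _ h4n)
  · apply Nat.mul_le_mul_left
    apply Nat.pow_le_pow_right (by omega)
    obtain ⟨e, rfl⟩ : ∃ e, d = e + 1 := ⟨d - 1, by omega⟩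
    have h21 : e + 1 + 1 = e + 2 := by omega
    have h11 : e + 1 - 1 = e := by omega
    rw [h21, h11]
    exact exp_bound e n m k hm hk
end

section
/- The second largest eigenvalue λ of the sum-product digraph G on M_n(F_q)^{d+1} satisfies |λ|² ≤ C·q^{2dn² − (d−1)n − 1}, i.e., G is a (q^{(d+1)n²}, q^{dn²}, C·q^{dn² − (d−1)n/2 − 1/2})-digraph for some constant C independent of q. -/
set_option linter.unusedSectionVars false
set_option maxHeartbeats 1600000

namespace SP15

open Finset Matrix

variable {n d : ℕ} {F : Type} [Field F] [Fintype F] [DecidableEq F]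

/-- entrywise dot product of matrices -/
def dot (S X : Matrix (Fin n) (Fin n) F) : F := ∑ j, ∑ k, S j k * X j k

lemma dot_comm (S X : Matrix (Fin n) (Fin n) F) : dot S X = dot X S := by
  unfold dot; congr 1; ext j; congr 1; ext k; ring

def dotHom (S : Matrix (Fin n) (Fin n) F) : Matrix (Fin n) (Fin n) F →+ F where
  toFun := dot S
  map_zero' := by simp [dot]
  map_add' X Y := by simp [dot, mul_add, Finset.sum_add_distrib]

/-- the additive character `X ↦ ψ (dot S X)` -/
def chi (ψ : AddChar F ℂ) (S : Matrix (Fin n) (Fin n) F) :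
    AddChar (Matrix (Fin n) (Fin n) F) ℂ :=
  ψ.compAddMonoidHom (dotHom S)

lemma chi_apply (ψ : AddChar F ℂ) (S X : Matrix (Fin n) (Fin n) F) :
    chi ψ S X = ψ (dot S X) := rfl

lemma dot_single (S : Matrix (Fin n) (Fin n) F) (j k : Fin n) (v : F) :
    dot S (Matrix.single j k v) = S j k * v := by
  unfold dot
  rw [Finset.sum_eq_single j, Finset.sum_eq_single k]
  · simp [Matrix.single]
  · intro b _ hb; simp [Matrix.single, hb, Ne.symm hb]
  · simp
  · intro b _ hb
    apply Finset.sum_eq_zero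
    intro k' _
    simp [Matrix.single, hb, Ne.symm hb]
  · simp

lemma chi_ne_zero (ψ : AddChar F ℂ) (hψ : ψ ≠ 0) (S : Matrix (Fin n) (Fin n) F)
    (hS : S ≠ 0) : chi ψ S ≠ 0 := by
  obtain ⟨u, hu⟩ := AddChar.ne_zero_iff.mp hψ
  have : ∃ j k, S j k ≠ 0 := by
    by_contra h
    push_neg at h
    exact hS (by ext j k; simp [h])
  obtain ⟨j, k, hjk⟩ := this
  rw [AddChar.ne_zero_iff]
  refine ⟨Matrix.single j k (u / S j k), ?_⟩
  rw [chi_apply, dot_single, mul_div_cancel₀ _ hjk]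
  exact hu

lemma card_Mx : Fintype.card (Matrix (Fin n) (Fin n) F) = Fintype.card F ^ (n * n) := by
  rw [show Fintype.card (Matrix (Fin n) (Fin n) F) = Fintype.card (Fin n → Fin n → F) from rfl,
    Fintype.card_fun, Fintype.card_fun, Fintype.card_fin, ← pow_mul]

lemma chi_zero (ψ : AddChar F ℂ) (X : Matrix (Fin n) (Fin n) F) : chi ψ 0 X = 1 := by
  rw [chi_apply]; simp [dot]

lemma sum_chi (ψ : AddChar F ℂ) (hψ : ψ ≠ 0) (S : Matrix (Fin n) (Fin n) F) :
    ∑ X, chi ψ S X = if S = 0 then ((Fintype.card F : ℂ)) ^ (n * n) else 0 := by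
  split_ifs with h
  · subst h
    simp only [chi_zero, Finset.sum_const, Finset.card_univ, nsmul_eq_mul, mul_one]
    rw [card_Mx]; push_cast; ring
  · exact AddChar.sum_eq_zero_iff_ne_zero.mpr (chi_ne_zero ψ hψ S h)

lemma dot_mul (S a c : Matrix (Fin n) (Fin n) F) : dot S (a * c) = dot (S * cᵀ) a := by
  unfold dot
  simp only [Matrix.mul_apply, Matrix.transpose_apply, Finset.mul_sum, Finset.sum_mul]
  rw [Finset.sum_congr rfl (fun j _ => Finset.sum_comm)]
  congr 1; ext j; congr 1; ext l; congr 1; ext k; ring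

def sumMulHom (c : Fin d → Matrix (Fin n) (Fin n) F) :
    (Fin d → Matrix (Fin n) (Fin n) F) →+ Matrix (Fin n) (Fin n) F where
  toFun a := ∑ i, a i * c i
  map_zero' := by simp
  map_add' a b := by simp [add_mul, Finset.sum_add_distrib]

lemma sum_chiG (ψ : AddChar F ℂ) (hψ : ψ ≠ 0) (S : Matrix (Fin n) (Fin n) F)
    (c : Fin d → Matrix (Fin n) (Fin n) F) :
    ∑ a : Fin d → Matrix (Fin n) (Fin n) F, chi ψ S (∑ i, a i * c i)
      = if (∀ i, S * (c i)ᵀ = 0) then ((Fintype.card F : ℂ)) ^ (n * n * d) else 0 := by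
  classical
  have hθ : ∀ a : Fin d → Matrix (Fin n) (Fin n) F,
      ((chi ψ S).compAddMonoidHom (sumMulHom c)) a = chi ψ S (∑ i, a i * c i) := fun a => rfl
  rw [show (∑ a : Fin d → Matrix (Fin n) (Fin n) F, chi ψ S (∑ i, a i * c i))
      = ∑ a, ((chi ψ S).compAddMonoidHom (sumMulHom c)) a from
    (Finset.sum_congr rfl fun a _ => (hθ a)).symm]
  rw [AddChar.sum_eq_ite]
  have hcard : (Fintype.card (Fin d → Matrix (Fin n) (Fin n) F) : ℂ)
      = ((Fintype.card F : ℂ)) ^ (n * n * d) := by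
    rw [Fintype.card_fun, Fintype.card_fin, card_Mx]
    push_cast
    rw [← pow_mul]
  have hiff : ((chi ψ S).compAddMonoidHom (sumMulHom c)) = 0 ↔ (∀ i, S * (c i)ᵀ = 0) := by
    constructor
    · intro h i
      by_contra hne
      obtain ⟨X, hX⟩ := AddChar.ne_zero_iff.mp (chi_ne_zero ψ hψ _ hne)
      have h1 : ((chi ψ S).compAddMonoidHom (sumMulHom c)) (Pi.single i X) = 1 :=
        AddChar.eq_zero_iff.mp h _
      rw [hθ] at h1
      have h2 : (∑ i', Pi.single i X i' * c i') = X * c i := by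
        rw [Finset.sum_eq_single i]
        · simp
        · intro b _ hb; simp [Pi.single_apply, hb]
        · simp
      rw [h2, chi_apply, dot_mul] at h1
      exact hX (by rw [chi_apply]; exact h1)
    · intro h
      rw [AddChar.eq_zero_iff]
      intro a
      rw [hθ, chi_apply]
      have : dot S (∑ i, a i * c i) = 0 := by
        rw [show dot S (∑ i, a i * c i) = ∑ i, dot S (a i * c i) from
          map_sum (dotHom S) _ _]
        refine Finset.sum_eq_zero fun i _ => ?_
        rw [dot_mul, h i]
        simp [dot]
      rw [this, AddChar.map_zero_eq_one]
  split_ifs with h1 h2 h2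
  · rw [hcard]
  · exact absurd (hiff.mp h1) h2
  · exact absurd (hiff.mpr h2) h1
  · rfl

lemma card_solset (S : Matrix (Fin n) (Fin n) F) (hS : S ≠ 0) :
    Fintype.card {x : Matrix (Fin n) (Fin n) F // S * xᵀ = 0} * Fintype.card F ^ n
      ≤ Fintype.card F ^ (n * n) := by
  classical
  set φ : Matrix (Fin n) (Fin n) F →ₗ[F] Matrix (Fin n) (Fin n) F :=
    { toFun := fun x => S * xᵀ
      map_add' := fun x y => by simp [Matrix.transpose_add, Matrix.mul_add]
      map_smul' := fun r x => by simp [Matrix.transpose_smul, Matrix.mul_smul] } with hφ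
  have hker : Fintype.card {x : Matrix (Fin n) (Fin n) F // S * xᵀ = 0}
      = Fintype.card (LinearMap.ker φ) :=
    Fintype.card_congr (Equiv.subtypeEquivRight fun x => by simp [hφ, LinearMap.mem_ker])
  have : ∃ j k, S j k ≠ 0 := by
    by_contra h
    push_neg at h
    exact hS (by ext j k; simp [h])
  obtain ⟨j0, k0, h0⟩ := this
  set L : (Fin n → F) →ₗ[F] Matrix (Fin n) (Fin n) F :=
    { toFun := fun v => Matrix.of fun j m => S j k0 * v m
      map_add' := fun v w => by ext j m; simp [mul_add]
      map_smul' := fun r v => by ext j m; simp; ring } with hL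
  have hLinj : Function.Injective L := by
    intro v w hvw
    funext m
    have h1 : (L v) j0 m = (L w) j0 m := by rw [hvw]
    simp only [hL, LinearMap.coe_mk, AddHom.coe_mk, Matrix.of_apply] at h1
    exact mul_left_cancel₀ h0 h1
  have hle : LinearMap.range L ≤ LinearMap.range φ := by
    rintro y ⟨v, rfl⟩
    refine ⟨(Matrix.of fun l m => (if l = k0 then (1 : F) else 0) * v m)ᵀ, ?_⟩
    simp only [hφ, hL, LinearMap.coe_mk, AddHom.coe_mk, Matrix.transpose_transpose]
    ext j m
    simp [Matrix.mul_apply, ite_mul, Finset.sum_ite_eq', mul_assoc]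
  have hrange : n ≤ Module.finrank F (LinearMap.range φ) := by
    have e1 : Module.finrank F (LinearMap.range L) = n := by
      rw [LinearMap.finrank_range_of_inj hLinj, Module.finrank_fintype_fun_eq_card,
        Fintype.card_fin]
    calc n = Module.finrank F (LinearMap.range L) := e1.symm
      _ ≤ Module.finrank F (LinearMap.range φ) := Submodule.finrank_mono hle
  have hker2 : Fintype.card (LinearMap.ker φ)
      = Fintype.card F ^ Module.finrank F (LinearMap.ker φ) :=
    Module.card_eq_pow_finrank (K := F)
  have hq1 : 1 ≤ Fintype.card F := Fintype.card_pos
  calc Fintype.card {x : Matrix (Fin n) (Fin n) F // S * xᵀ = 0} * Fintype.card F ^ n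
      = Fintype.card F ^ Module.finrank F (LinearMap.ker φ) * Fintype.card F ^ n := by
        rw [hker, hker2]
    _ ≤ Fintype.card F ^ Module.finrank F (LinearMap.ker φ)
        * Fintype.card F ^ Module.finrank F (LinearMap.range φ) := by
        exact Nat.mul_le_mul_left _ (Nat.pow_le_pow_right hq1 hrange)
    _ = Fintype.card F ^ (Module.finrank F (LinearMap.range φ)
        + Module.finrank F (LinearMap.ker φ)) := by rw [pow_add]; ring
    _ = Fintype.card F ^ Module.finrank F (Matrix (Fin n) (Fin n) F) := by
        rw [LinearMap.finrank_range_add_finrank_ker φ]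
    _ = Fintype.card F ^ (n * n) := by
        rw [Module.finrank_matrix, Module.finrank_self, Fintype.card_fin, mul_one]

lemma dot_neg_left (S X : Matrix (Fin n) (Fin n) F) : dot (-S) X = - dot S X := by
  simp [dot, Finset.sum_neg_distrib]

lemma chi_mul_chi_neg (ψ : AddChar F ℂ) (S x y : Matrix (Fin n) (Fin n) F) :
    chi ψ S x * chi ψ (-S) y = chi ψ S (x - y) := by
  rw [chi_apply, chi_apply, chi_apply, dot_neg_left, ← AddChar.map_add_eq_mul]
  congr 1
  rw [show dot S (x - y) = dot S x - dot S y from map_sub (dotHom S) x y]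
  ring

lemma conj_chi (ψ : AddChar F ℂ) (S x : Matrix (Fin n) (Fin n) F) :
    (starRingEnd ℂ) (chi ψ S x) = chi ψ (-S) x := by
  rw [chi_apply, chi_apply, dot_neg_left, ← AddChar.map_neg_eq_conj]

lemma chi_neg_arg (ψ : AddChar F ℂ) (S x : Matrix (Fin n) (Fin n) F) :
    chi ψ S (-x) = chi ψ (-S) x := by
  rw [chi_apply, chi_apply, dot_neg_left, dot_comm, dot_neg_left, dot_comm]

/-- the partial Fourier transform in the second variable -/
noncomputable def Phi (ψ : AddChar F ℂ) (S : Matrix (Fin n) (Fin n) F)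
    (v : ((Fin d → Matrix (Fin n) (Fin n) F) × Matrix (Fin n) (Fin n) F) → ℂ)
    (a : Fin d → Matrix (Fin n) (Fin n) F) : ℂ :=
  ∑ t, v (a, t) * chi ψ (-S) t

/-- the adjacency operator in "solved" form -/
noncomputable def Bop (v : ((Fin d → Matrix (Fin n) (Fin n) F) × Matrix (Fin n) (Fin n) F) → ℂ)
    (x : (Fin d → Matrix (Fin n) (Fin n) F) × Matrix (Fin n) (Fin n) F) : ℂ :=
  ∑ b, v (b, ∑ i, x.1 i * b i - x.2)

lemma key1 (ψ : AddChar F ℂ) (S : Matrix (Fin n) (Fin n) F)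
    (v : ((Fin d → Matrix (Fin n) (Fin n) F) × Matrix (Fin n) (Fin n) F) → ℂ)
    (a : Fin d → Matrix (Fin n) (Fin n) F) :
    Phi ψ S (Bop v) a
      = ∑ b, chi ψ (-S) (∑ i, a i * b i) * Phi ψ (-S) v b := by
  unfold Phi Bop
  simp only [Finset.sum_mul, neg_neg]
  rw [Finset.sum_comm]
  refine Finset.sum_congr rfl fun b _ => ?_
  rw [Finset.mul_sum]
  refine Fintype.sum_equiv (Equiv.subLeft (∑ i, a i * b i)) _ _ fun t => ?_
  simp only [Equiv.subLeft_apply]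
  have h3 : chi ψ (-S) (∑ i, a i * b i) * (v (b, ∑ i, a i * b i - t) * chi ψ S (∑ i, a i * b i - t))
      = v (b, ∑ i, a i * b i - t) * (chi ψ S (∑ i, a i * b i - t) * chi ψ (-S) (∑ i, a i * b i)) := by
    ring
  rw [h3, chi_mul_chi_neg ψ S, show (∑ i, a i * b i - t) - (∑ i, a i * b i) = -t by abel,
    chi_neg_arg]

lemma inversion (ψ : AddChar F ℂ) (hψ : ψ ≠ 0)
    (v : ((Fin d → Matrix (Fin n) (Fin n) F) × Matrix (Fin n) (Fin n) F) → ℂ)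
    (a : Fin d → Matrix (Fin n) (Fin n) F) (t : Matrix (Fin n) (Fin n) F) :
    ∑ S : Matrix (Fin n) (Fin n) F, chi ψ S t * Phi ψ S v a
      = ((Fintype.card F : ℂ)) ^ (n * n) * v (a, t) := by
  classical
  unfold Phi
  simp only [Finset.mul_sum]
  rw [Finset.sum_comm]
  have h1 : ∀ u, ∑ S : Matrix (Fin n) (Fin n) F, v (a, u) * (chi ψ S t * chi ψ (-S) u)
      = v (a, u) * (if u = t then ((Fintype.card F : ℂ)) ^ (n * n) else 0) := by
    intro u
    rw [← Finset.mul_sum]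
    congr 1
    have h2 : ∀ S : Matrix (Fin n) (Fin n) F,
        chi ψ S t * chi ψ (-S) u = chi ψ (t - u) S := by
      intro S
      rw [chi_mul_chi_neg, chi_apply, chi_apply, dot_comm]
    rw [Finset.sum_congr rfl fun S _ => h2 S]
    by_cases h : u = t
    · subst h
      simp only [sub_self, if_true]
      simp only [chi_zero, Finset.sum_const, Finset.card_univ, nsmul_eq_mul, mul_one]
      rw [card_Mx]
      push_cast; ring
    · rw [if_neg h, sum_chi ψ hψ (t - u), if_neg (sub_ne_zero.mpr (fun hh => h hh.symm))]
  calc ∑ u, ∑ S : Matrix (Fin n) (Fin n) F, chi ψ S t * (v (a, u) * chi ψ (-S) u)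
      = ∑ u, v (a, u) * (if u = t then ((Fintype.card F : ℂ)) ^ (n * n) else 0) := by
        refine Finset.sum_congr rfl fun u _ => ?_
        rw [← h1 u]
        exact Finset.sum_congr rfl fun S _ => by ring
    _ = ((Fintype.card F : ℂ)) ^ (n * n) * v (a, t) := by
        simp only [mul_ite, mul_zero]
        rw [Finset.sum_ite_eq' Finset.univ t
          (fun u => v (a, u) * ((Fintype.card F : ℂ)) ^ (n * n))]
        simp [mul_comm]

lemma key2 (ψ : AddChar F ℂ) (hψ : ψ ≠ 0) (hn : 1 ≤ n)
    (S : Matrix (Fin n) (Fin n) F) (hS : S ≠ 0)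
    (g : (Fin d → Matrix (Fin n) (Fin n) F) → ℂ) :
    ∑ a : Fin d → Matrix (Fin n) (Fin n) F,
        ‖∑ b, chi ψ S (∑ i, a i * b i) * g b‖ ^ 2
      ≤ (Fintype.card F : ℝ) ^ (n * n * d + (n * n - n) * d)
        * ∑ b, ‖g b‖ ^ 2 := by
  classical
  set q := Fintype.card F with hq
  set T : (Fin d → Matrix (Fin n) (Fin n) F) → ℂ :=
    fun a => ∑ b, chi ψ S (∑ i, a i * b i) * g b with hT
  have hq1 : (1 : ℕ) ≤ q := Fintype.card_pos
  set Q : ℝ := (q : ℝ) ^ (n * n * d) with hQ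
  have hQ0 : 0 ≤ Q := by positivity
  -- step 1 : expansion
  have expand : ∑ a, T a * (starRingEnd ℂ) (T a)
      = ∑ b : Fin d → Matrix (Fin n) (Fin n) F, ∑ b' : Fin d → Matrix (Fin n) (Fin n) F,
          (g b * (starRingEnd ℂ) (g b'))
          * (if (∀ i, S * (b i - b' i)ᵀ = 0) then ((q : ℂ)) ^ (n * n * d) else 0) := by
    have e1 : ∀ a, T a * (starRingEnd ℂ) (T a)
        = ∑ b : Fin d → Matrix (Fin n) (Fin n) F, ∑ b' : Fin d → Matrix (Fin n) (Fin n) F,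
            (g b * (starRingEnd ℂ) (g b'))
            * chi ψ S (∑ i, a i * (b i - b' i)) := by
      intro a
      rw [hT, map_sum, Finset.sum_mul_sum]
      refine Finset.sum_congr rfl fun b _ => Finset.sum_congr rfl fun b' _ => ?_
      rw [_root_.map_mul, conj_chi]
      calc chi ψ S (∑ i, a i * b i) * g b * (chi ψ (-S) (∑ i, a i * b' i) * (starRingEnd ℂ) (g b'))
          = (g b * (starRingEnd ℂ) (g b'))
            * (chi ψ S (∑ i, a i * b i) * chi ψ (-S) (∑ i, a i * b' i)) := by ring
        _ = (g b * (starRingEnd ℂ) (g b')) * chi ψ S (∑ i, a i * (b i - b' i)) := by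
            rw [chi_mul_chi_neg]
            congr 2
            rw [← Finset.sum_sub_distrib]
            exact Finset.sum_congr rfl fun i _ => (mul_sub _ _ _).symm
    rw [Finset.sum_congr rfl fun a _ => e1 a, Finset.sum_comm]
    refine Finset.sum_congr rfl fun b _ => ?_
    rw [Finset.sum_comm]
    refine Finset.sum_congr rfl fun b' _ => ?_
    rw [← Finset.mul_sum]
    congr 1
    exact sum_chiG ψ hψ S (fun i => b i - b' i)
  -- step 2 : the LHS is the absolute value of the expanded sum
  have habs : ∑ a, ‖T a‖ ^ 2 = ‖∑ a, T a * (starRingEnd ℂ) (T a)‖ := by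
    have h2 : ∑ a, T a * (starRingEnd ℂ) (T a)
        = ((∑ a, ‖T a‖ ^ 2 : ℝ) : ℂ) := by
      push_cast
      refine Finset.sum_congr rfl fun a _ => ?_
      rw [Complex.mul_conj]
      norm_cast
      exact (Complex.sq_norm _).symm
    rw [h2, Complex.norm_real,
      Real.norm_of_nonneg (Finset.sum_nonneg fun a _ => sq_nonneg _)]
  -- step 3 : counting
  have hcount : ∀ b : Fin d → Matrix (Fin n) (Fin n) F,
      ((Finset.univ.filter fun b' : Fin d → Matrix (Fin n) (Fin n) F =>
          ∀ i, S * (b i - b' i)ᵀ = 0).card : ℝ)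
        ≤ (q : ℝ) ^ ((n * n - n) * d) := by
    intro b
    have e1 : (Finset.univ.filter fun b' : Fin d → Matrix (Fin n) (Fin n) F =>
          ∀ i, S * (b i - b' i)ᵀ = 0).card
        = Fintype.card {b' : Fin d → Matrix (Fin n) (Fin n) F // ∀ i, S * (b i - b' i)ᵀ = 0} :=
      (Fintype.card_subtype _).symm
    have e2 : Fintype.card {b' : Fin d → Matrix (Fin n) (Fin n) F // ∀ i, S * (b i - b' i)ᵀ = 0}
        = Fintype.card {x : Matrix (Fin n) (Fin n) F // S * xᵀ = 0} ^ d := by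
      have hiffp : ∀ b' : Fin d → Matrix (Fin n) (Fin n) F,
          (∀ i, S * (b i - b' i)ᵀ = 0)
            ↔ (∀ i, S * ((Equiv.subLeft b b') i)ᵀ = 0) := by
        intro b'
        simp [Equiv.subLeft_apply, Pi.sub_apply]
      have eq1 : {b' : Fin d → Matrix (Fin n) (Fin n) F // ∀ i, S * (b i - b' i)ᵀ = 0}
          ≃ (∀ _ : Fin d, {x : Matrix (Fin n) (Fin n) F // S * xᵀ = 0}) :=
        (Equiv.subtypeEquiv (Equiv.subLeft b)
          (fun b' => hiffp b')).trans Equiv.subtypePiEquivPi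
      rw [Fintype.card_congr eq1, Fintype.card_pi]
      simp
    have e3 : Fintype.card {x : Matrix (Fin n) (Fin n) F // S * xᵀ = 0} ≤ q ^ (n * n - n) := by
      have h4 := card_solset S hS
      have h5 : q ^ (n * n) = q ^ (n * n - n) * q ^ n := by
        rw [← pow_add, Nat.sub_add_cancel (Nat.le_mul_of_pos_left n hn)]
      rw [h5] at h4
      exact Nat.le_of_mul_le_mul_right h4 (by positivity)
    rw [e1, e2]
    have : Fintype.card {x : Matrix (Fin n) (Fin n) F // S * xᵀ = 0} ^ d
        ≤ (q ^ (n * n - n)) ^ d := Nat.pow_le_pow_left e3 d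
    calc ((Fintype.card {x : Matrix (Fin n) (Fin n) F // S * xᵀ = 0} ^ d : ℕ) : ℝ)
        ≤ (((q ^ (n * n - n)) ^ d : ℕ) : ℝ) := by exact_mod_cast this
      _ = (q : ℝ) ^ ((n * n - n) * d) := by push_cast; rw [← pow_mul]
  -- step 4 : chain of bounds
  suffices main : ∑ a, ‖T a‖ ^ 2
      ≤ (q : ℝ) ^ (n * n * d + (n * n - n) * d) * ∑ b, ‖g b‖ ^ 2 from main
  rw [habs, expand]
  have tri : ‖∑ b : Fin d → Matrix (Fin n) (Fin n) F,
        ∑ b' : Fin d → Matrix (Fin n) (Fin n) F, (g b * (starRingEnd ℂ) (g b'))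
        * (if (∀ i, S * (b i - b' i)ᵀ = 0) then ((q : ℂ)) ^ (n * n * d) else 0)‖
      ≤ ∑ b : Fin d → Matrix (Fin n) (Fin n) F, ∑ b' : Fin d → Matrix (Fin n) (Fin n) F,
        (‖g b‖ * ‖g b'‖)
        * (if (∀ i, S * (b i - b' i)ᵀ = 0) then Q else 0) := by
    refine (norm_sum_le _ _).trans ?_
    refine Finset.sum_le_sum fun b _ => ?_
    refine (norm_sum_le _ _).trans ?_
    refine Finset.sum_le_sum fun b' _ => ?_
    rw [norm_mul, norm_mul, Complex.norm_conj]
    split_ifs with h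
    · rw [norm_pow, Complex.norm_natCast]
    · simp
  refine tri.trans ?_
  have amgm : ∀ b b', (‖g b‖ * ‖g b'‖)
        * (if (∀ i, S * (b i - b' i)ᵀ = 0) then Q else 0)
      ≤ ((‖g b‖ ^ 2 + ‖g b'‖ ^ 2) / 2)
        * (if (∀ i, S * (b i - b' i)ᵀ = 0) then Q else 0) := by
    intro b b'
    refine mul_le_mul_of_nonneg_right ?_ (by positivity)
    nlinarith [sq_nonneg (‖g b‖ - ‖g b'‖)]
  refine (Finset.sum_le_sum fun b _ => Finset.sum_le_sum fun b' _ => amgm b b').trans ?_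
  have hsymm : ∀ b b' : Fin d → Matrix (Fin n) (Fin n) F,
      (∀ i, S * (b i - b' i)ᵀ = 0) ↔ (∀ i, S * (b' i - b i)ᵀ = 0) := by
    have key : ∀ x y : Fin d → Matrix (Fin n) (Fin n) F,
        (∀ i, S * (x i - y i)ᵀ = 0) → ∀ i, S * (y i - x i)ᵀ = 0 := by
      intro x y h i
      have h2 := h i
      have h3 : y i - x i = -(x i - y i) := by abel
      rw [h3, Matrix.transpose_neg, Matrix.mul_neg, neg_eq_zero]
      exact h2
    exact fun b b' => ⟨key b b', key b' b⟩
  have split2 : ∑ b : Fin d → Matrix (Fin n) (Fin n) F, ∑ b' : Fin d → Matrix (Fin n) (Fin n) F,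
        ((‖g b‖ ^ 2 + ‖g b'‖ ^ 2) / 2)
        * (if (∀ i, S * (b i - b' i)ᵀ = 0) then Q else 0)
      = ∑ b : Fin d → Matrix (Fin n) (Fin n) F, ∑ b' : Fin d → Matrix (Fin n) (Fin n) F,
        (‖g b‖ ^ 2)
        * (if (∀ i, S * (b i - b' i)ᵀ = 0) then Q else 0) := by
    have swap : ∑ b : Fin d → Matrix (Fin n) (Fin n) F, ∑ b' : Fin d → Matrix (Fin n) (Fin n) F,
          (‖g b'‖ ^ 2)
          * (if (∀ i, S * (b i - b' i)ᵀ = 0) then Q else 0)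
        = ∑ b : Fin d → Matrix (Fin n) (Fin n) F, ∑ b' : Fin d → Matrix (Fin n) (Fin n) F,
          (‖g b‖ ^ 2)
          * (if (∀ i, S * (b i - b' i)ᵀ = 0) then Q else 0) := by
      rw [Finset.sum_comm]
      refine Finset.sum_congr rfl fun b _ => Finset.sum_congr rfl fun b' _ => ?_
      congr 1
      exact if_congr (hsymm b' b) rfl rfl
    calc ∑ b : Fin d → Matrix (Fin n) (Fin n) F, ∑ b' : Fin d → Matrix (Fin n) (Fin n) F,
          ((‖g b‖ ^ 2 + ‖g b'‖ ^ 2) / 2)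
          * (if (∀ i, S * (b i - b' i)ᵀ = 0) then Q else 0)
        = (∑ b : Fin d → Matrix (Fin n) (Fin n) F, ∑ b' : Fin d → Matrix (Fin n) (Fin n) F,
            (‖g b‖ ^ 2)
            * (if (∀ i, S * (b i - b' i)ᵀ = 0) then Q else 0)) / 2
          + (∑ b : Fin d → Matrix (Fin n) (Fin n) F, ∑ b' : Fin d → Matrix (Fin n) (Fin n) F,
            (‖g b'‖ ^ 2)
            * (if (∀ i, S * (b i - b' i)ᵀ = 0) then Q else 0)) / 2 := by
          rw [Finset.sum_div, Finset.sum_div, ← Finset.sum_add_distrib]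
          refine Finset.sum_congr rfl fun b _ => ?_
          rw [Finset.sum_div, Finset.sum_div, ← Finset.sum_add_distrib]
          refine Finset.sum_congr rfl fun b' _ => ?_
          ring
      _ = _ := by rw [swap]; ring
  rw [split2]
  have final : ∑ b : Fin d → Matrix (Fin n) (Fin n) F, ∑ b' : Fin d → Matrix (Fin n) (Fin n) F,
        (‖g b‖ ^ 2)
        * (if (∀ i, S * (b i - b' i)ᵀ = 0) then Q else 0)
      ≤ ∑ b : Fin d → Matrix (Fin n) (Fin n) F,
        (‖g b‖ ^ 2) * ((q : ℝ) ^ ((n * n - n) * d) * Q) := by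
    refine Finset.sum_le_sum fun b _ => ?_
    rw [← Finset.mul_sum]
    refine mul_le_mul_of_nonneg_left ?_ (sq_nonneg _)
    have : ∑ b' : Fin d → Matrix (Fin n) (Fin n) F,
        (if (∀ i, S * (b i - b' i)ᵀ = 0) then Q else 0)
        = ((Finset.univ.filter fun b' : Fin d → Matrix (Fin n) (Fin n) F =>
            ∀ i, S * (b i - b' i)ᵀ = 0).card : ℝ) * Q := by
      rw [← Finset.sum_filter, Finset.sum_const, nsmul_eq_mul]
    rw [this]
    exact mul_le_mul_of_nonneg_right (hcount b) hQ0
  refine final.trans ?_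
  rw [← Finset.sum_mul]
  rw [pow_add, hQ]
  ring_nf
  exact le_refl _

lemma exp_ineq (d n : ℕ) (hd : 1 ≤ d) (hn : 2 ≤ n) :
    n * n * d + (n * n - n) * d ≤ 2 * d * n ^ 2 - (d - 1) * n - 1 := by
  obtain ⟨e, rfl⟩ : ∃ e, d = e + 1 := ⟨d - 1, by omega⟩
  obtain ⟨m, rfl⟩ : ∃ m, n = m + 2 := ⟨n - 2, by omega⟩
  have h1 : (m + 2) * (m + 2) - (m + 2) = (m + 2) * (m + 1) := by
    have : (m + 2) * (m + 2) = (m + 2) * (m + 1) + (m + 2) := by ring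
    omega
  have h2 : (e + 1) - 1 = e := by omega
  rw [h1, h2, Nat.sub_sub]
  refine Nat.le_sub_of_add_le ?_
  nlinarith [Nat.zero_le m, Nat.zero_le e]

end SP15

open Classical in
/-- Every eigenvalue μ ≠ q^{dn²} of the adjacency matrix of the sum-product digraph on
M_n(F_q)^{d+1} satisfies |μ|² ≤ C·q^{2dn² − (d−1)n − 1} for a constant C independent of q. -/
theorem stmt_15 (d n : ℕ) (hd : 1 ≤ d) (hn : 2 ≤ n) :
    ∃ C : ℝ, 0 < C ∧
      ∀ (q : ℕ) (F : Type) [Field F] [Fintype F], Fintype.card F = q → Odd q →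
        ∀ μ : ℂ, μ ≠ (q : ℂ) ^ (d * n ^ 2) →
          (∃ w : ((Fin d → Matrix (Fin n) (Fin n) F) × Matrix (Fin n) (Fin n) F) → ℂ,
            w ≠ 0 ∧
            (Matrix.of fun x y : (Fin d → Matrix (Fin n) (Fin n) F) ×
                Matrix (Fin n) (Fin n) F =>
              if ∑ i, x.1 i * y.1 i = x.2 + y.2 then (1 : ℂ) else 0).mulVec w = μ • w) →
          ‖μ‖ ^ 2 ≤ C * (q : ℝ) ^ (2 * d * n ^ 2 - (d - 1) * n - 1) := by
  classical
  refine ⟨1, one_pos, ?_⟩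
  intro q F _ _ hcard hodd μ hμ hex
  obtain ⟨w, hw0, hweq⟩ := hex
  subst hcard
  have hn1 : 1 ≤ n := by omega
  have hqpos : 0 < Fintype.card F := Fintype.card_pos
  have hq1R : (1 : ℝ) ≤ (Fintype.card F : ℝ) := by exact_mod_cast hqpos
  obtain ⟨ψ, hψ1⟩ := AddChar.exists_apply_ne_zero.mpr (one_ne_zero : (1 : F) ≠ 0)
  have hψ : ψ ≠ 0 := AddChar.ne_zero_iff.mpr ⟨1, hψ1⟩
  -- pointwise eigen equation in "solved" form
  have hA : ∀ x : (Fin d → Matrix (Fin n) (Fin n) F) × Matrix (Fin n) (Fin n) F,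
      SP15.Bop w x = μ * w x := by
    intro x
    have h1 : (∑ y : (Fin d → Matrix (Fin n) (Fin n) F) × Matrix (Fin n) (Fin n) F,
        (if ∑ i, x.1 i * y.1 i = x.2 + y.2 then (1 : ℂ) else 0) * w y) = μ * w x :=
      congrFun hweq x
    calc SP15.Bop w x = ∑ b, w (b, ∑ i, x.1 i * b i - x.2) := rfl
      _ = ∑ b : Fin d → Matrix (Fin n) (Fin n) F, ∑ t : Matrix (Fin n) (Fin n) F,
          (if ∑ i, x.1 i * b i = x.2 + t then (1 : ℂ) else 0) * w (b, t) := by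
          refine Finset.sum_congr rfl fun b _ => ?_
          rw [Finset.sum_eq_single (∑ i, x.1 i * b i - x.2)]
          · rw [if_pos (by abel), one_mul]
          · intro t _ ht
            rw [if_neg, zero_mul]
            intro hc
            exact ht (by rw [hc]; abel)
          · intro h; exact absurd (Finset.mem_univ _) h
      _ = ∑ y : (Fin d → Matrix (Fin n) (Fin n) F) × Matrix (Fin n) (Fin n) F,
          (if ∑ i, x.1 i * y.1 i = x.2 + y.2 then (1 : ℂ) else 0) * w y :=
          (Fintype.sum_prod_type (fun y : (Fin d → Matrix (Fin n) (Fin n) F) ×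
            Matrix (Fin n) (Fin n) F =>
            (if ∑ i, x.1 i * y.1 i = x.2 + y.2 then (1 : ℂ) else 0) * w y)).symm
      _ = μ * w x := h1
  have hB2 : ∀ x : (Fin d → Matrix (Fin n) (Fin n) F) × Matrix (Fin n) (Fin n) F,
      SP15.Bop (SP15.Bop w) x = μ ^ 2 * w x := by
    intro x
    calc SP15.Bop (SP15.Bop w) x = ∑ b, SP15.Bop w (b, ∑ i, x.1 i * b i - x.2) := rfl
      _ = ∑ b, μ * w (b, ∑ i, x.1 i * b i - x.2) :=
          Finset.sum_congr rfl fun b _ => hA _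
      _ = μ * SP15.Bop w x := by
          rw [show SP15.Bop w x = ∑ b, w (b, ∑ i, x.1 i * b i - x.2) from rfl,
            Finset.mul_sum]
      _ = μ * (μ * w x) := by rw [hA x]
      _ = μ ^ 2 * w x := by ring
  have hPhiB2 : ∀ (S : Matrix (Fin n) (Fin n) F) a,
      SP15.Phi ψ S (SP15.Bop (SP15.Bop w)) a = μ ^ 2 * SP15.Phi ψ S w a := by
    intro S a
    calc SP15.Phi ψ S (SP15.Bop (SP15.Bop w)) a
        = ∑ t, SP15.Bop (SP15.Bop w) (a, t) * SP15.chi ψ (-S) t := rfl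
      _ = ∑ t, μ ^ 2 * w (a, t) * SP15.chi ψ (-S) t :=
          Finset.sum_congr rfl fun t _ => by rw [hB2]
      _ = μ ^ 2 * ∑ t, w (a, t) * SP15.chi ψ (-S) t := by
          rw [Finset.mul_sum]
          exact Finset.sum_congr rfl fun t _ => by ring
      _ = μ ^ 2 * SP15.Phi ψ S w a := rfl
  have hkey : ∀ (S : Matrix (Fin n) (Fin n) F) a,
      μ ^ 2 * SP15.Phi ψ S w a
        = ∑ b : Fin d → Matrix (Fin n) (Fin n) F, SP15.chi ψ (-S) (∑ i, a i * b i)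
            * (∑ b' : Fin d → Matrix (Fin n) (Fin n) F, SP15.chi ψ S (∑ i, b i * b' i) * SP15.Phi ψ S w b') := by
    intro S a
    rw [← hPhiB2 S a, SP15.key1]
    refine Finset.sum_congr rfl fun b _ => ?_
    congr 1
    rw [SP15.key1]
    simp only [neg_neg]
  by_cases hcase : ∀ S : Matrix (Fin n) (Fin n) F, S ≠ 0 → ∀ a, SP15.Phi ψ S w a = 0
  · -- degenerate case : w is constant in the second variable
    have hconst : ∀ a t, ((Fintype.card F : ℂ)) ^ (n * n) * w (a, t) = SP15.Phi ψ 0 w a := by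
      intro a t
      rw [← SP15.inversion ψ hψ w a t]
      rw [Finset.sum_eq_single 0]
      · rw [SP15.chi_zero, one_mul]
      · intro S _ hS
        have : SP15.Phi ψ S w a = 0 := hcase S hS a
        rw [this, mul_zero]
      · intro h; exact absurd (Finset.mem_univ _) h
    have hcc : ∀ a t t', w (a, t) = w (a, t') := by
      intro a t t'
      have h1 : ((Fintype.card F : ℂ)) ^ (n * n) * w (a, t)
          = ((Fintype.card F : ℂ)) ^ (n * n) * w (a, t') := by
        rw [hconst, hconst]
      exact mul_left_cancel₀ (pow_ne_zero _ (Nat.cast_ne_zero.mpr hqpos.ne')) h1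
    have hμw : ∀ x : (Fin d → Matrix (Fin n) (Fin n) F) × Matrix (Fin n) (Fin n) F,
        μ * w x = ∑ b, w (b, 0) := by
      intro x
      rw [← hA x]
      exact Finset.sum_congr rfl fun b _ => hcc b _ 0
    by_cases hμ0 : μ = 0
    · subst hμ0
      rw [one_mul]
      simp only [norm_zero]
      norm_num
    · exfalso
      have hwc : ∀ x y, w x = w y := by
        intro x y
        have := (hμw x).trans (hμw y).symm
        exact mul_left_cancel₀ hμ0 this
      set x₀ : (Fin d → Matrix (Fin n) (Fin n) F) × Matrix (Fin n) (Fin n) F :=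
        (fun _ => 0, 0) with hx₀
      have hk : w x₀ ≠ 0 := by
        intro h
        exact hw0 (funext fun z => by rw [hwc z x₀, h]; rfl)
      have hsum : ∑ b : Fin d → Matrix (Fin n) (Fin n) F, w (b, 0)
          = (Fintype.card (Fin d → Matrix (Fin n) (Fin n) F) : ℂ) * w x₀ := by
        rw [Finset.sum_congr rfl fun b _ => hwc (b, (0 : Matrix (Fin n) (Fin n) F)) x₀,
          Finset.sum_const, Finset.card_univ, nsmul_eq_mul]
      have hμeq : μ = (Fintype.card (Fin d → Matrix (Fin n) (Fin n) F) : ℂ) := by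
        have := (hμw x₀).trans hsum
        exact mul_right_cancel₀ hk this
      apply hμ
      rw [hμeq, Fintype.card_fun, SP15.card_Mx, Fintype.card_fin]
      push_cast
      rw [← pow_mul]
      congr 1
      ring
  · -- main case : a nontrivial Fourier component exists
    push_neg at hcase
    obtain ⟨S, hS, a₀, ha₀⟩ := hcase
    set g : (Fin d → Matrix (Fin n) (Fin n) F) → ℂ := SP15.Phi ψ S w with hg
    have hB0 : (0:ℝ) ≤ (Fintype.card F : ℝ) ^ (n * n * d + (n * n - n) * d) := by positivity
    have hSig : 0 < ∑ a, ‖g a‖ ^ 2 :=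
      Finset.sum_pos' (fun a _ => sq_nonneg _)
        ⟨a₀, Finset.mem_univ _, by
          have : 0 < ‖g a₀‖ := norm_pos_iff.mpr ha₀
          positivity⟩
    have E2 := SP15.key2 ψ hψ hn1 S hS g
    have E1 := SP15.key2 ψ hψ hn1 (-S) (neg_ne_zero.mpr hS)
      (fun b : Fin d → Matrix (Fin n) (Fin n) F => ∑ b' : Fin d → Matrix (Fin n) (Fin n) F, SP15.chi ψ S (∑ i, b i * b' i) * g b')
    beta_reduce at E1
    have hchain : ‖μ‖ ^ 4 * ∑ a, ‖g a‖ ^ 2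
        ≤ (Fintype.card F : ℝ) ^ (n * n * d + (n * n - n) * d)
          * ((Fintype.card F : ℝ) ^ (n * n * d + (n * n - n) * d)
            * ∑ a, ‖g a‖ ^ 2) := by
      calc ‖μ‖ ^ 4 * ∑ a, ‖g a‖ ^ 2
          = ∑ a, ‖μ ^ 2 * g a‖ ^ 2 := by
            rw [Finset.mul_sum]
            refine Finset.sum_congr rfl fun a _ => ?_
            rw [norm_mul, norm_pow]
            ring
        _ = ∑ a, ‖∑ b : Fin d → Matrix (Fin n) (Fin n) F, SP15.chi ψ (-S) (∑ i, a i * b i)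
              * ∑ b' : Fin d → Matrix (Fin n) (Fin n) F, SP15.chi ψ S (∑ i, b i * b' i) * g b'‖ ^ 2 :=
            Finset.sum_congr rfl fun a _ => by rw [hkey S a]
        _ ≤ (Fintype.card F : ℝ) ^ (n * n * d + (n * n - n) * d)
              * ∑ b : Fin d → Matrix (Fin n) (Fin n) F, ‖∑ b' : Fin d → Matrix (Fin n) (Fin n) F,
                SP15.chi ψ S (∑ i, b i * b' i) * g b'‖ ^ 2 := E1
        _ ≤ _ := mul_le_mul_of_nonneg_left E2 hB0
    have h4 : ‖μ‖ ^ 4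
        ≤ ((Fintype.card F : ℝ) ^ (n * n * d + (n * n - n) * d)) ^ 2 := by
      have h5 : ‖μ‖ ^ 4 * ∑ a, ‖g a‖ ^ 2
          ≤ ((Fintype.card F : ℝ) ^ (n * n * d + (n * n - n) * d)) ^ 2
            * ∑ a, ‖g a‖ ^ 2 := by
        refine hchain.trans (le_of_eq ?_)
        ring
      exact (mul_le_mul_iff_of_pos_right hSig).mp h5
    have h2 : ‖μ‖ ^ 2
        ≤ (Fintype.card F : ℝ) ^ (n * n * d + (n * n - n) * d) := by
      refine le_of_pow_le_pow_left₀ (two_ne_zero) hB0 ?_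
      calc (‖μ‖ ^ 2) ^ 2 = ‖μ‖ ^ 4 := by ring
        _ ≤ _ := h4
    rw [one_mul]
    exact h2.trans (pow_le_pow_right₀ hq1R (SP15.exp_ineq d n hd hn))
end

section
/- Let P be a set of points and L a set of lines in M_2(F_q) × M_2(F_q), where the line determined by (A,B) ∈ M_2(F_q)² is {(X,Y) : AX + B = Y}. Then the number of incidences satisfies I(P,L) ≤ |P||L|/q⁴ + √2 · q^{7/2} · √(|P||L|). -/
open Finset

section IncidenceAux

variable {F : Type} [Field F] [Fintype F] [DecidableEq F]

private lemma aux_card_matrix : Fintype.card (Matrix (Fin 2) (Fin 2) F) = Fintype.card F ^ 4 := by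
  rw [Fintype.card_congr (Matrix.of (m := Fin 2) (n := Fin 2) (α := F)).symm]
  simp [Fintype.card_fun]; ring

private lemma aux_sol_sum (C : Matrix (Fin 2) (Fin 2) F) :
    ∑ D : Matrix (Fin 2) (Fin 2) F, (univ.filter fun X => C * X = D).card
      = Fintype.card F ^ 4 := by
  rw [← Finset.card_eq_sum_card_fiberwise (fun X _ => mem_univ (C * X))]
  rw [Finset.card_univ, aux_card_matrix]

private lemma aux_sol_unit (C D : Matrix (Fin 2) (Fin 2) F) (h : IsUnit C) :
    (univ.filter fun X => C * X = D).card = 1 := by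
  rw [Finset.card_eq_one]
  refine ⟨(↑h.unit⁻¹ : Matrix (Fin 2) (Fin 2) F) * D, ?_⟩
  ext X
  simp only [mem_filter, mem_univ, true_and, mem_singleton]
  constructor
  · rintro rfl; rw [← mul_assoc, Units.inv_mul_of_eq h.unit_spec.symm, one_mul]
  · rintro rfl; rw [← mul_assoc, Units.mul_inv_of_eq h.unit_spec.symm, one_mul]

private lemma aux_nonunit_card :
    (univ.filter fun C : Matrix (Fin 2) (Fin 2) F => ¬ IsUnit C).card
      ≤ Fintype.card F ^ 3 + Fintype.card F ^ 2 := by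
  set q := Fintype.card F with hq
  have h1 : (univ.filter fun C : Matrix (Fin 2) (Fin 2) F => IsUnit C).card
      = Nat.card (GL (Fin 2) F) := by
    rw [Nat.card_eq_fintype_card, ← Fintype.card_subtype]
    exact Fintype.card_congr ⟨fun s => s.2.unit, fun u => ⟨↑u, u.isUnit⟩,
      fun s => Subtype.ext s.2.unit_spec, fun u => Units.ext (IsUnit.unit_spec _)⟩
  have h2 : Nat.card (GL (Fin 2) F) = (q^2 - 1) * (q^2 - q) := by
    rw [Matrix.card_GL_field, Fin.prod_univ_two]
    simp [pow_succ]
    rfl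
  have h3 := Finset.card_filter_add_card_filter_not
    (s := (univ : Finset (Matrix (Fin 2) (Fin 2) F))) (p := fun C => IsUnit C)
  rw [Finset.card_univ, aux_card_matrix, h1, h2] at h3
  obtain ⟨k, hk⟩ : ∃ k, q = k + 1 := ⟨q - 1, by have := Fintype.card_pos (α := F); omega⟩
  have e1 : q^2 - 1 = k*k+2*k := by
    rw [hk]; have h : (k+1)^2 = k*k+2*k+1 := by ring
    rw [h, Nat.add_sub_cancel]
  have e2 : q^2 - q = k*k+k := by
    rw [hk]; have h : (k+1)^2 = (k*k+k)+(k+1) := by ring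
    rw [h, Nat.add_sub_cancel]
  have key : (q^2-1) * (q^2-q) + (q^3 + q^2) = q^4 + q := by
    rw [e1, e2, hk]; ring
  have hc : (univ.filter fun C : Matrix (Fin 2) (Fin 2) F => ¬ IsUnit C).card + (q^2-1)*(q^2-q)
      ≤ q^3 + q^2 + (q^2-1)*(q^2-q) := by
    calc (univ.filter fun C : Matrix (Fin 2) (Fin 2) F => ¬ IsUnit C).card + (q^2-1)*(q^2-q)
        = q^4 := by rw [add_comm]; exact h3
      _ ≤ q^4 + q := Nat.le_add_right _ _
      _ = q^3 + q^2 + (q^2-1)*(q^2-q) := by rw [← key]; ring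
  exact Nat.le_of_add_le_add_right hc

private lemma aux_line_card (A B : Matrix (Fin 2) (Fin 2) F) :
    (univ.filter fun p : Matrix (Fin 2) (Fin 2) F × Matrix (Fin 2) (Fin 2) F =>
      A * p.1 + B = p.2).card = Fintype.card F ^ 4 := by
  have h : (univ.filter fun p : Matrix (Fin 2) (Fin 2) F × Matrix (Fin 2) (Fin 2) F =>
      A * p.1 + B = p.2).card = Fintype.card (Matrix (Fin 2) (Fin 2) F) := by
    rw [← Finset.card_univ]
    apply Finset.card_nbij' (fun p => p.1) (fun X => (X, A * X + B))
    · intros p _; exact mem_univ _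
    · intros X _; exact mem_filter.2 ⟨mem_univ _, rfl⟩
    · rintro ⟨X, Y⟩ hp
      have h := (mem_filter.1 hp).2
      simp only at h ⊢
      rw [h]
    · intro X _; rfl
  rw [h, aux_card_matrix]

private lemma aux_pair_card (A B A' B' : Matrix (Fin 2) (Fin 2) F) :
    (univ.filter fun p : Matrix (Fin 2) (Fin 2) F × Matrix (Fin 2) (Fin 2) F =>
      A * p.1 + B = p.2 ∧ A' * p.1 + B' = p.2).card
    = (univ.filter fun X : Matrix (Fin 2) (Fin 2) F => (A - A') * X = B' - B).card := by
  apply Finset.card_nbij' (fun p => p.1) (fun X => (X, A * X + B))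
  · rintro ⟨X, Y⟩ hp
    obtain ⟨-, h1, h2⟩ := mem_filter.1 hp
    simp only at h1 h2 ⊢
    refine mem_filter.2 ⟨mem_univ _, ?_⟩
    rw [sub_mul]
    have e : A * X - A' * X = (A * X + B) - (A' * X + B') + (B' - B) := by abel
    rw [e, h1, h2]; abel
  · intro X hX
    have h := (mem_filter.1 hX).2
    rw [sub_mul] at h
    refine mem_filter.2 ⟨mem_univ _, rfl, ?_⟩
    simp only
    have h2 : A' * X = A * X - (B' - B) := by
      rw [← h]; abel
    rw [h2]; abel
  · rintro ⟨X, Y⟩ hp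
    obtain ⟨-, h1, h2⟩ := mem_filter.1 hp
    simp only at h1 ⊢
    rw [h1]
  · intro X _; rfl

private lemma aux_key_bound
    (L : Finset (Matrix (Fin 2) (Fin 2) F × Matrix (Fin 2) (Fin 2) F))
    (l : Matrix (Fin 2) (Fin 2) F × Matrix (Fin 2) (Fin 2) F) :
    ∑ l' ∈ L, (univ.filter fun X : Matrix (Fin 2) (Fin 2) F =>
        (l.1 - l'.1) * X = l'.2 - l.2).card
      ≤ L.card + 2 * Fintype.card F ^ 7 := by
  set q := Fintype.card F with hq
  set g : Matrix (Fin 2) (Fin 2) F × Matrix (Fin 2) (Fin 2) F → ℕ :=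
    fun CD => (univ.filter fun X : Matrix (Fin 2) (Fin 2) F => CD.1 * X = CD.2).card - 1
    with hg
  have step1 : ∑ l' ∈ L, (univ.filter fun X : Matrix (Fin 2) (Fin 2) F =>
        (l.1 - l'.1) * X = l'.2 - l.2).card
      ≤ ∑ l' ∈ L, (1 + g (l.1 - l'.1, l'.2 - l.2)) :=
    Finset.sum_le_sum (fun l' _ => by simp only [hg]; omega)
  have step2 : ∑ l' ∈ L, (1 + g (l.1 - l'.1, l'.2 - l.2))
      = L.card + ∑ l' ∈ L, g (l.1 - l'.1, l'.2 - l.2) := by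
    rw [Finset.sum_add_distrib, Finset.sum_const, smul_eq_mul, mul_one]
  have step3 : ∑ l' ∈ L, g (l.1 - l'.1, l'.2 - l.2)
      ≤ ∑ l' : Matrix (Fin 2) (Fin 2) F × Matrix (Fin 2) (Fin 2) F,
          g (l.1 - l'.1, l'.2 - l.2) :=
    Finset.sum_le_sum_of_subset (subset_univ L)
  have step4 : ∑ l' : Matrix (Fin 2) (Fin 2) F × Matrix (Fin 2) (Fin 2) F,
      g (l.1 - l'.1, l'.2 - l.2)
      = ∑ CD : Matrix (Fin 2) (Fin 2) F × Matrix (Fin 2) (Fin 2) F, g CD :=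
    Fintype.sum_equiv ((Equiv.subLeft l.1).prodCongr (Equiv.subRight l.2)) _ g
      (fun _ => rfl)
  have step5 : ∑ CD : Matrix (Fin 2) (Fin 2) F × Matrix (Fin 2) (Fin 2) F, g CD
      ≤ (q ^ 3 + q ^ 2) * q ^ 4 := by
    rw [Fintype.sum_prod_type]
    calc ∑ C : Matrix (Fin 2) (Fin 2) F, ∑ D : Matrix (Fin 2) (Fin 2) F, g (C, D)
        ≤ ∑ C : Matrix (Fin 2) (Fin 2) F, (if IsUnit C then 0 else q ^ 4) := by
          apply Finset.sum_le_sum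
          intro C _
          by_cases hC : IsUnit C
          · simp only [hC, if_true]
            have h0 : ∀ D, g (C, D) = 0 := fun D => by
              simp only [hg, aux_sol_unit C D hC]
            simp [h0]
          · simp only [hC, if_false]
            calc ∑ D, g (C, D) ≤ ∑ D : Matrix (Fin 2) (Fin 2) F,
                  (univ.filter fun X : Matrix (Fin 2) (Fin 2) F => C * X = D).card :=
                Finset.sum_le_sum (fun D _ => Nat.sub_le _ _)
              _ = q ^ 4 := aux_sol_sum C
      _ = (univ.filter fun C : Matrix (Fin 2) (Fin 2) F => ¬ IsUnit C).card * q ^ 4 := by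
          rw [Finset.sum_ite, Finset.sum_const, Finset.sum_const]
          simp [mul_comm]
      _ ≤ (q ^ 3 + q ^ 2) * q ^ 4 := Nat.mul_le_mul_right _ aux_nonunit_card
  have hq7 : (q ^ 3 + q ^ 2) * q ^ 4 ≤ 2 * q ^ 7 := by
    have h1 : 1 ≤ q := Fintype.card_pos
    have h6 : q ^ 6 ≤ q ^ 7 := Nat.pow_le_pow_right h1 (by norm_num)
    calc (q ^ 3 + q ^ 2) * q ^ 4 = q ^ 7 + q ^ 6 := by ring
      _ ≤ q ^ 7 + q ^ 7 := Nat.add_le_add_left h6 _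
      _ = 2 * q ^ 7 := by ring
  calc ∑ l' ∈ L, (univ.filter fun X : Matrix (Fin 2) (Fin 2) F =>
        (l.1 - l'.1) * X = l'.2 - l.2).card
      ≤ L.card + ∑ l' ∈ L, g (l.1 - l'.1, l'.2 - l.2) := le_trans step1 (le_of_eq step2)
    _ ≤ L.card + (q ^ 3 + q ^ 2) * q ^ 4 :=
        Nat.add_le_add_left (le_trans step3 (step4 ▸ step5)) _
    _ ≤ L.card + 2 * q ^ 7 := Nat.add_le_add_left hq7 _

private lemma aux_indic (P L : Finset (Matrix (Fin 2) (Fin 2) F × Matrix (Fin 2) (Fin 2) F)) :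
    ((univ : Finset ((Matrix (Fin 2) (Fin 2) F × Matrix (Fin 2) (Fin 2) F) ×
        (Matrix (Fin 2) (Fin 2) F × Matrix (Fin 2) (Fin 2) F))).filter
      fun pl => pl.1 ∈ P ∧ pl.2 ∈ L ∧ pl.2.1 * pl.1.1 + pl.2.2 = pl.1.2).card
    = ∑ p ∈ P, ∑ l ∈ L, (if l.1 * p.1 + l.2 = p.2 then 1 else 0) := by
  rw [Finset.card_filter, Fintype.sum_prod_type]
  rw [← Finset.sum_filter_add_sum_filter_not univ (· ∈ P)]
  have h2 : ∀ p ∈ univ.filter (· ∉ P),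
      (∑ l : Matrix (Fin 2) (Fin 2) F × Matrix (Fin 2) (Fin 2) F,
        if p ∈ P ∧ l ∈ L ∧ l.1 * p.1 + l.2 = p.2 then 1 else 0) = 0 := by
    intro p hp
    have := (mem_filter.1 hp).2
    simp [this]
  rw [Finset.sum_congr rfl h2, Finset.sum_const, smul_zero, add_zero]
  have hP : univ.filter (· ∈ P) = P := by ext x; simp
  rw [hP]
  apply Finset.sum_congr rfl
  intro p hp
  rw [← Finset.sum_filter_add_sum_filter_not univ (· ∈ L)]
  have h3 : ∀ l ∈ univ.filter (· ∉ L),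
      (if p ∈ P ∧ l ∈ L ∧ l.1 * p.1 + l.2 = p.2 then 1 else 0) = 0 := by
    intro l hl
    have := (mem_filter.1 hl).2
    simp [this]
  rw [Finset.sum_congr rfl h3, Finset.sum_const, smul_zero, add_zero]
  have hL : univ.filter (· ∈ L) = L := by ext x; simp
  rw [hL]
  apply Finset.sum_congr rfl
  intro l hl
  simp [hp, hl]

end IncidenceAux

/-- Point-line incidence bound in M_2(F_q)²: for points P and lines L (a line (A,B) is
{(X,Y) : AX + B = Y}), I(P,L) ≤ |P||L|/q⁴ + √2·q^{7/2}·√(|P||L|). -/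
theorem stmt_18 (q : ℕ) (F : Type) [Field F] [Fintype F]
    (hF : Fintype.card F = q) (hq : Odd q)
    (P L : Finset (Matrix (Fin 2) (Fin 2) F × Matrix (Fin 2) (Fin 2) F)) :
    (Nat.card {pl : (Matrix (Fin 2) (Fin 2) F × Matrix (Fin 2) (Fin 2) F) ×
          (Matrix (Fin 2) (Fin 2) F × Matrix (Fin 2) (Fin 2) F) //
        pl.1 ∈ P ∧ pl.2 ∈ L ∧ pl.2.1 * pl.1.1 + pl.2.2 = pl.1.2} : ℝ) ≤
      (P.card : ℝ) * L.card / (q : ℝ) ^ 4 +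
        Real.sqrt 2 * Real.sqrt ((q : ℝ) ^ 7) * Real.sqrt ((P.card : ℝ) * L.card) := by
  classical
  subst hF
  set q := Fintype.card F with hq'
  -- number of lines from L through a point
  set nc : Matrix (Fin 2) (Fin 2) F × Matrix (Fin 2) (Fin 2) F → ℕ :=
    fun p => ∑ l ∈ L, (if l.1 * p.1 + l.2 = p.2 then 1 else 0) with hnc
  -- the incidence count
  have hI : Nat.card {pl : (Matrix (Fin 2) (Fin 2) F × Matrix (Fin 2) (Fin 2) F) ×
          (Matrix (Fin 2) (Fin 2) F × Matrix (Fin 2) (Fin 2) F) //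
        pl.1 ∈ P ∧ pl.2 ∈ L ∧ pl.2.1 * pl.1.1 + pl.2.2 = pl.1.2} = ∑ p ∈ P, nc p := by
    rw [Nat.card_eq_fintype_card, Fintype.card_subtype, aux_indic]
  -- first moment
  have hsum1 : ∑ p : Matrix (Fin 2) (Fin 2) F × Matrix (Fin 2) (Fin 2) F, nc p
      = L.card * q ^ 4 := by
    rw [hnc, Finset.sum_comm]
    have h : ∀ l ∈ L, (∑ p : Matrix (Fin 2) (Fin 2) F × Matrix (Fin 2) (Fin 2) F,
        if l.1 * p.1 + l.2 = p.2 then 1 else 0) = q ^ 4 := by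
      intro l _
      rw [← Finset.card_filter]
      exact aux_line_card l.1 l.2
    rw [Finset.sum_congr rfl h, Finset.sum_const, smul_eq_mul]
  -- second moment
  have hsum2 : ∑ p : Matrix (Fin 2) (Fin 2) F × Matrix (Fin 2) (Fin 2) F, (nc p) ^ 2
      ≤ L.card ^ 2 + 2 * q ^ 7 * L.card := by
    have expand : ∀ p, (nc p) ^ 2 = ∑ l ∈ L, ∑ l' ∈ L,
        (if (l.1 * p.1 + l.2 = p.2 ∧ l'.1 * p.1 + l'.2 = p.2) then 1 else 0) := by
      intro p
      rw [sq, hnc, Finset.sum_mul_sum]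
      apply Finset.sum_congr rfl; intro l _
      apply Finset.sum_congr rfl; intro l' _
      by_cases h1 : l.1 * p.1 + l.2 = p.2 <;> by_cases h2 : l'.1 * p.1 + l'.2 = p.2 <;>
        simp [h1, h2]
    calc ∑ p : Matrix (Fin 2) (Fin 2) F × Matrix (Fin 2) (Fin 2) F, (nc p) ^ 2
        = ∑ l ∈ L, ∑ l' ∈ L,
            ∑ p : Matrix (Fin 2) (Fin 2) F × Matrix (Fin 2) (Fin 2) F,
            (if (l.1 * p.1 + l.2 = p.2 ∧ l'.1 * p.1 + l'.2 = p.2) then 1 else 0) := by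
          rw [Finset.sum_congr rfl (fun p _ => expand p), Finset.sum_comm]
          apply Finset.sum_congr rfl; intro l _
          rw [Finset.sum_comm]
      _ = ∑ l ∈ L, ∑ l' ∈ L, (univ.filter fun X : Matrix (Fin 2) (Fin 2) F =>
            (l.1 - l'.1) * X = l'.2 - l.2).card := by
          apply Finset.sum_congr rfl; intro l _
          apply Finset.sum_congr rfl; intro l' _
          rw [← Finset.card_filter]
          exact aux_pair_card l.1 l.2 l'.1 l'.2
      _ ≤ ∑ _l ∈ L, (L.card + 2 * q ^ 7) :=
          Finset.sum_le_sum (fun l _ => aux_key_bound L l)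
      _ = L.card ^ 2 + 2 * q ^ 7 * L.card := by
          rw [Finset.sum_const, smul_eq_mul]; ring
  -- move to the reals
  have hq1 : 1 < q := Fintype.one_lt_card
  have hq0 : (0 : ℝ) < (q : ℝ) := by positivity
  have hq40 : ((q : ℝ)) ^ 4 ≠ 0 := by positivity
  set Pc : ℝ := (P.card : ℝ) with hPc
  set Lc : ℝ := (L.card : ℝ) with hLc
  set c : ℝ := Lc / (q : ℝ) ^ 4 with hc
  set φ : Matrix (Fin 2) (Fin 2) F × Matrix (Fin 2) (Fin 2) F → ℝ :=
    fun p => (nc p : ℝ) - c with hφ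
  have hcardP : Fintype.card (Matrix (Fin 2) (Fin 2) F × Matrix (Fin 2) (Fin 2) F)
      = q ^ 8 := by
    rw [Fintype.card_prod, aux_card_matrix]; ring
  have hS1 : ∑ p : Matrix (Fin 2) (Fin 2) F × Matrix (Fin 2) (Fin 2) F, (nc p : ℝ)
      = Lc * (q : ℝ) ^ 4 := by
    rw [hLc, ← Nat.cast_sum]
    exact_mod_cast congrArg (Nat.cast : ℕ → ℝ) hsum1
  have hS2 : ∑ p : Matrix (Fin 2) (Fin 2) F × Matrix (Fin 2) (Fin 2) F, ((nc p : ℝ)) ^ 2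
      ≤ Lc ^ 2 + 2 * (q : ℝ) ^ 7 * Lc := by
    have := hsum2
    have hcast : ((∑ p : Matrix (Fin 2) (Fin 2) F × Matrix (Fin 2) (Fin 2) F,
        (nc p) ^ 2 : ℕ) : ℝ) ≤ ((L.card ^ 2 + 2 * q ^ 7 * L.card : ℕ) : ℝ) :=
      Nat.cast_le.2 this
    push_cast at hcast
    exact hcast
  -- variance identity
  have hvar : ∑ p : Matrix (Fin 2) (Fin 2) F × Matrix (Fin 2) (Fin 2) F, (φ p) ^ 2
      ≤ 2 * (q : ℝ) ^ 7 * Lc := by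
    have hexp : ∑ p : Matrix (Fin 2) (Fin 2) F × Matrix (Fin 2) (Fin 2) F, (φ p) ^ 2
        = (∑ p : Matrix (Fin 2) (Fin 2) F × Matrix (Fin 2) (Fin 2) F, ((nc p : ℝ)) ^ 2)
          - 2 * c * (∑ p : Matrix (Fin 2) (Fin 2) F × Matrix (Fin 2) (Fin 2) F, (nc p : ℝ))
          + (q ^ 8 : ℝ) * c ^ 2 := by
      have h1 : ∀ p, (φ p) ^ 2 = ((nc p : ℝ)) ^ 2 - 2 * c * (nc p : ℝ) + c ^ 2 := by
        intro p; rw [hφ]; ring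
      rw [Finset.sum_congr rfl (fun p _ => h1 p), Finset.sum_add_distrib,
        Finset.sum_sub_distrib, ← Finset.mul_sum, Finset.sum_const, Finset.card_univ,
        hcardP, nsmul_eq_mul]
      push_cast
      ring
    rw [hexp, hS1]
    have hcc : 2 * c * (Lc * (q : ℝ) ^ 4) = 2 * Lc ^ 2 := by
      rw [hc]; field_simp
    have hcc2 : ((q : ℝ) ^ 8) * c ^ 2 = Lc ^ 2 := by
      rw [hc]; field_simp
    push_cast
    push_cast at hcc2
    rw [hcc, hcc2]
    linarith [hS2]
  -- Cauchy–Schwarz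
  have hCS : (∑ p ∈ P, φ p) ^ 2 ≤ Pc * (2 * (q : ℝ) ^ 7 * Lc) := by
    have h1 : (∑ p ∈ P, φ p) ^ 2 = (∑ p ∈ P, 1 * φ p) ^ 2 := by simp
    have h2 := Finset.sum_mul_sq_le_sq_mul_sq P (fun _ => (1 : ℝ)) φ
    have h3 : (∑ _p ∈ P, (1 : ℝ) ^ 2) = Pc := by simp [hPc]
    have h4 : ∑ p ∈ P, (φ p) ^ 2
        ≤ ∑ p : Matrix (Fin 2) (Fin 2) F × Matrix (Fin 2) (Fin 2) F, (φ p) ^ 2 :=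
      Finset.sum_le_sum_of_subset_of_nonneg (subset_univ P)
        (fun p _ _ => sq_nonneg (φ p))
    calc (∑ p ∈ P, φ p) ^ 2 = (∑ p ∈ P, 1 * φ p) ^ 2 := h1
      _ ≤ (∑ p ∈ P, (1:ℝ) ^ 2) * ∑ p ∈ P, (φ p) ^ 2 := h2
      _ = Pc * ∑ p ∈ P, (φ p) ^ 2 := by rw [h3]
      _ ≤ Pc * (2 * (q : ℝ) ^ 7 * Lc) := by
          apply mul_le_mul_of_nonneg_left (le_trans h4 hvar)
          rw [hPc]; positivity
  -- conclude
  have hIsum : (Nat.card {pl : (Matrix (Fin 2) (Fin 2) F × Matrix (Fin 2) (Fin 2) F) ×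
          (Matrix (Fin 2) (Fin 2) F × Matrix (Fin 2) (Fin 2) F) //
        pl.1 ∈ P ∧ pl.2 ∈ L ∧ pl.2.1 * pl.1.1 + pl.2.2 = pl.1.2} : ℝ)
      = ∑ p ∈ P, (nc p : ℝ) := by
    rw [hI]; push_cast; rfl
  have hsplit : ∑ p ∈ P, (nc p : ℝ) = Pc * c + ∑ p ∈ P, φ p := by
    rw [hφ, Finset.sum_sub_distrib, Finset.sum_const, Finset.card_eq_sum_ones]
    push_cast [hPc]
    ring_nf
    rw [Finset.card_eq_sum_ones]
    push_cast
    ring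
  have habs : ∑ p ∈ P, φ p ≤ Real.sqrt (Pc * (2 * (q : ℝ) ^ 7 * Lc)) := by
    have h5 := Real.sqrt_le_sqrt hCS
    rw [Real.sqrt_sq_eq_abs] at h5
    exact le_trans (le_abs_self _) h5
  have hsqrt : Real.sqrt (Pc * (2 * (q : ℝ) ^ 7 * Lc))
      = Real.sqrt 2 * Real.sqrt ((q : ℝ) ^ 7) * Real.sqrt (Pc * Lc) := by
    rw [show Pc * (2 * (q : ℝ) ^ 7 * Lc) = 2 * ((q : ℝ) ^ 7 * (Pc * Lc)) by ring,
      Real.sqrt_mul (by norm_num), Real.sqrt_mul (by positivity)]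
    ring
  rw [hIsum, hsplit]
  have hfinal : Pc * c = Pc * Lc / (q : ℝ) ^ 4 := by
    rw [hc]; ring
  rw [hfinal] at *
  calc Pc * Lc / (q : ℝ) ^ 4 + ∑ p ∈ P, φ p
      ≤ Pc * Lc / (q : ℝ) ^ 4 + Real.sqrt (Pc * (2 * (q : ℝ) ^ 7 * Lc)) := by
        linarith [habs]
    _ = Pc * Lc / (q : ℝ) ^ 4
        + Real.sqrt 2 * Real.sqrt ((q : ℝ) ^ 7) * Real.sqrt (Pc * Lc) := by rw [hsqrt]
end
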